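/- arXiv:2006.14069 — 8 statements merged into one kernel-verified Lean document; each statement's English description precedes it below -/
import Mathlib

section
/- For a path graph (linear tree) on n ≥ 2 vertices, the maximum over all bijections π from the vertex set to {1,...,n} of the sum over edges {u,v} of |π(u) - π(v)| equals ⌊n²/2⌋ - 1. -/
open Finset

/-- The length of an edge under a linear arrangement `π` (positions `0,…,n-1`,
which gives the same lengths as positions `1,…,n`). -/
def edgeLen {n : ℕ} (π : Equiv.Perm (Fin n)) : Sym2 (Fin n) → ℕ :=
  Sym2.lift ⟨fun u v => ((π u : ℤ) - (π v : ℤ)).natAbs, fun u v => by dsimp only; omega⟩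

/-- The sum of edge lengths of the graph `G` under the linear arrangement `π`. -/
def D {n : ℕ} (G : SimpleGraph (Fin n)) [DecidableRel G.Adj] (π : Equiv.Perm (Fin n)) : ℕ :=
  ∑ e ∈ G.edgeFinset, edgeLen π e

/-- The maximum of `D` over all linear arrangements. -/
def Dmax {n : ℕ} (G : SimpleGraph (Fin n)) [DecidableRel G.Adj] : ℕ :=
  Finset.univ.sup (D G)

/-- The minimum of `D` over all linear arrangements. -/
def Dmin {n : ℕ} (G : SimpleGraph (Fin n)) [DecidableRel G.Adj] : ℕ :=
  Finset.univ.inf' ⟨Equiv.refl _, Finset.mem_univ _⟩ (D G)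

/-- The path graph (linear tree) on `n` vertices. -/
def pathG (n : ℕ) : SimpleGraph (Fin n) where
  Adj u v := (u : ℕ) + 1 = v ∨ (v : ℕ) + 1 = u
  symm := ⟨fun u v h => h.symm⟩
  loopless := ⟨fun u h => by omega⟩

instance (n : ℕ) : DecidableRel (pathG n).Adj :=
  fun u v => inferInstanceAs (Decidable (_ ∨ _))

/-- The star tree on `n` vertices, with hub at vertex `0`. -/
def starG (n : ℕ) : SimpleGraph (Fin n) where
  Adj u v := u ≠ v ∧ ((u : ℕ) = 0 ∨ (v : ℕ) = 0)
  symm := ⟨fun u v h => ⟨h.1.symm, h.2.symm⟩⟩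
  loopless := ⟨fun u h => h.1 rfl⟩

instance (n : ℕ) : DecidableRel (starG n).Adj :=
  fun u v => inferInstanceAs (Decidable (_ ∧ _))

/-- The bistar tree on `n` vertices with hub degrees `k1` and `n - k1`:
vertex `0` is a hub adjacent to vertex `1` and to the leaves `2,…,k1`;
vertex `1` is a hub adjacent to vertex `0` and to the leaves `k1+1,…,n-1`. -/
def bistarG (n k1 : ℕ) : SimpleGraph (Fin n) where
  Adj u v := u ≠ v ∧
    (((u : ℕ) = 0 ∧ ((v : ℕ) = 1 ∨ (2 ≤ (v : ℕ) ∧ (v : ℕ) ≤ k1))) ∨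
     ((v : ℕ) = 0 ∧ ((u : ℕ) = 1 ∨ (2 ≤ (u : ℕ) ∧ (u : ℕ) ≤ k1))) ∨
     ((u : ℕ) = 1 ∧ k1 < (v : ℕ)) ∨
     ((v : ℕ) = 1 ∧ k1 < (u : ℕ)))
  symm := ⟨fun u v h => ⟨h.1.symm, by tauto⟩⟩
  loopless := ⟨fun u h => h.1 rfl⟩

instance (n k1 : ℕ) : DecidableRel (bistarG n k1).Adj :=
  fun u v => inferInstanceAs (Decidable (_ ∧ _))

/-- The sum of the lengths of the edges incident to vertex `i` under arrangement `π`. -/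
def Dinc {n : ℕ} (G : SimpleGraph (Fin n)) [DecidableRel G.Adj] (i : Fin n)
    (π : Equiv.Perm (Fin n)) : ℕ :=
  ∑ v ∈ G.neighborFinset i, ((π i : ℤ) - (π v : ℤ)).natAbs

namespace PathAux

lemma card_even_range (N : ℕ) : #((range N).filter (fun i => i % 2 = 0)) = (N+1)/2 := by
  induction N with
  | zero => simp
  | succ N ih =>
    rw [Finset.range_add_one, Finset.filter_insert]
    by_cases h : N % 2 = 0
    · rw [if_pos h, Finset.card_insert_of_notMem (by simp)]
      omega
    · rw [if_neg h]; omega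

lemma card_odd_range (N : ℕ) : #((range N).filter (fun i => i % 2 = 1)) = N/2 := by
  induction N with
  | zero => simp
  | succ N ih =>
    rw [Finset.range_add_one, Finset.filter_insert]
    by_cases h : N % 2 = 1
    · rw [if_pos h, Finset.card_insert_of_notMem (by simp)]
      omega
    · rw [if_neg h]; omega

def cross (a b t : ℕ) : Prop := (a < t ∧ t ≤ b) ∨ (b < t ∧ t ≤ a)

instance (a b t : ℕ) : Decidable (cross a b t) := by unfold cross; infer_instance

def Δ (a b : ℕ) : ℕ := max a b - min a b

lemma delta_eq_card_cross {n a b : ℕ} (ha : a < n) (hb : b < n) :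
    Δ a b = #((Ico 1 n).filter (fun t => cross a b t)) := by
  have h : (Ico 1 n).filter (fun t => cross a b t) = Ioc (min a b) (max a b) := by
    ext t
    rw [mem_filter]
    simp only [cross, mem_filter, mem_Ico, mem_Ioc]
    omega
  rw [h, Nat.card_Ioc]
  unfold Δ
  rfl

def X (p : ℕ → ℕ) (n t : ℕ) : ℕ :=
  #((range (n-1)).filter (fun i => cross (p i) (p (i+1)) t))

lemma sum_delta_eq {n : ℕ} (p : ℕ → ℕ) (hp : ∀ i < n, p i < n) :
    ∑ i ∈ range (n-1), Δ (p i) (p (i+1)) = ∑ t ∈ Ico 1 n, X p n t := by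
  have h1 : ∀ i ∈ range (n-1), Δ (p i) (p (i+1)) =
      ∑ t ∈ Ico 1 n, if cross (p i) (p (i+1)) t then 1 else 0 := by
    intro i hi
    rw [mem_range] at hi
    rw [delta_eq_card_cross (hp i (by omega)) (hp (i+1) (by omega)), Finset.card_filter]
  rw [Finset.sum_congr rfl h1, Finset.sum_comm]
  exact Finset.sum_congr rfl fun t _ => (Finset.card_filter _ _).symm

lemma card_lt {n : ℕ} (p : ℕ → ℕ) (hp : ∀ i < n, p i < n)
    (hinj : ∀ i < n, ∀ j < n, p i = p j → i = j) {t : ℕ} (ht : t ≤ n) :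
    #((range n).filter (fun i => p i < t)) = t := by
  have hinj' : Set.InjOn p (range n) := by
    intro i hi j hj h
    simp only [coe_range, Set.mem_Iio] at hi hj
    exact hinj i hi j hj h
  have himg : (range n).image p = range n := by
    apply Finset.eq_of_subset_of_card_le
    · intro v hv
      simp only [mem_image, mem_range] at hv ⊢
      obtain ⟨i, hi, rfl⟩ := hv
      exact hp i hi
    · rw [Finset.card_image_of_injOn hinj', card_range]
  have : ((range n).filter (fun i => p i < t)).image p = range t := by
    rw [← Finset.filter_image (p := fun v => v < t), himg]
    ext v; simp only [mem_filter, mem_range]; omega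
  calc #((range n).filter (fun i => p i < t))
      = #(((range n).filter (fun i => p i < t)).image p) :=
        (Finset.card_image_of_injOn (hinj'.mono (by intro x hx; simp at hx ⊢; exact hx.1))).symm
    _ = t := by rw [this, card_range]

end PathAux

namespace PathAux

lemma X_le_two_t {n : ℕ} (p : ℕ → ℕ) (hp : ∀ i < n, p i < n)
    (hinj : ∀ i < n, ∀ j < n, p i = p j → i = j) {t : ℕ} (ht : t ≤ n) :
    X p n t ≤ 2 * t := by
  unfold X
  have h := Finset.card_le_mul_card_image_of_maps_to
    (f := fun i => if p i < t then i else i + 1)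
    (s := (range (n-1)).filter (fun i => cross (p i) (p (i+1)) t))
    (t := (range n).filter (fun j => p j < t))
    ?_ 2 ?_
  · calc #((range (n-1)).filter (fun i => cross (p i) (p (i+1)) t)) ≤ 2 * #((range n).filter (fun j => p j < t)) := h
      _ = 2 * t := by rw [card_lt p hp hinj ht]
  · intro i hi
    simp only [mem_filter, mem_range] at hi ⊢
    obtain ⟨hi1, hi2⟩ := hi
    rcases hi2 with ⟨h1, h2⟩ | ⟨h1, h2⟩
    · rw [if_pos h1]; exact ⟨by omega, h1⟩
    · rw [if_neg (by omega)]; exact ⟨by omega, h1⟩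
  · intro b _
    calc #(((range (n-1)).filter (fun i => cross (p i) (p (i+1)) t)).filter
            (fun i => (if p i < t then i else i + 1) = b))
        ≤ #({b - 1, b} : Finset ℕ) := by
          apply Finset.card_le_card
          intro i hi
          simp only [mem_filter] at hi
          obtain ⟨_, h2⟩ := hi
          simp only [mem_insert, mem_singleton]
          split at h2 <;> omega
      _ ≤ 2 := Finset.card_insert_le _ _ |>.trans (by simp)

lemma X_le_two_nt {n : ℕ} (p : ℕ → ℕ) (hp : ∀ i < n, p i < n)
    (hinj : ∀ i < n, ∀ j < n, p i = p j → i = j) {t : ℕ} (ht : t ≤ n) :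
    X p n t ≤ 2 * (n - t) := by
  unfold X
  have hcard : #((range n).filter (fun j => ¬ p j < t)) = n - t := by
    have h := Finset.card_filter_add_card_filter_not
      (s := range n) (p := fun j => p j < t)
    rw [card_lt p hp hinj ht, card_range] at h
    omega
  have h := Finset.card_le_mul_card_image_of_maps_to
    (f := fun i => if p i < t then i + 1 else i)
    (s := (range (n-1)).filter (fun i => cross (p i) (p (i+1)) t))
    (t := (range n).filter (fun j => ¬ p j < t))
    ?_ 2 ?_
  · calc #((range (n-1)).filter (fun i => cross (p i) (p (i+1)) t))
        ≤ 2 * #((range n).filter (fun j => ¬ p j < t)) := h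
      _ = 2 * (n - t) := by rw [hcard]
  · intro i hi
    simp only [mem_filter, mem_range] at hi ⊢
    obtain ⟨hi1, hi2⟩ := hi
    rcases hi2 with ⟨h1, h2⟩ | ⟨h1, h2⟩
    · rw [if_pos h1]; exact ⟨by omega, by omega⟩
    · rw [if_neg (by omega)]; exact ⟨by omega, by omega⟩
  · intro b _
    calc #(((range (n-1)).filter (fun i => cross (p i) (p (i+1)) t)).filter
            (fun i => (if p i < t then i + 1 else i) = b))
        ≤ #({b - 1, b} : Finset ℕ) := by
          apply Finset.card_le_card
          intro i hi
          simp only [mem_filter] at hi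
          obtain ⟨_, h2⟩ := hi
          simp only [mem_insert, mem_singleton]
          split at h2 <;> omega
      _ ≤ 2 := Finset.card_insert_le _ _ |>.trans (by simp)

lemma X_le_len {n : ℕ} (p : ℕ → ℕ) (t : ℕ) : X p n t ≤ n - 1 := by
  unfold X
  exact (Finset.card_filter_le _ _).trans (by rw [card_range])

lemma sum_two_t (m : ℕ) : ∑ t ∈ Ico 1 m, 2 * t = m * (m - 1) := by
  induction m with
  | zero => simp
  | succ m ih =>
    rcases Nat.eq_zero_or_pos m with rfl | hm
    · simp
    · rw [Finset.sum_Ico_succ_top hm, ih]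
      obtain ⟨m', rfl⟩ := Nat.exists_eq_add_of_lt hm
      simp only [Nat.add_sub_cancel]
      ring

lemma sum_mirror (a c : ℕ) (h : a ≤ c) :
    ∑ t ∈ Ico a c, 2 * (c - t) = ∑ s ∈ Ico 1 (c - a + 1), 2 * s := by
  apply Finset.sum_nbij' (i := fun t => c - t) (j := fun s => c - s) <;>
    intro x hx <;> simp only [mem_Ico] at hx ⊢ <;> omega

end PathAux

namespace PathAux

lemma X_mid_odd {m : ℕ} (hm : 1 ≤ m) (p : ℕ → ℕ) (hp : ∀ i < 2*m+1, p i < 2*m+1)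
    (hinj : ∀ i < 2*m+1, ∀ j < 2*m+1, p i = p j → i = j) :
    X p (2*m+1) m + X p (2*m+1) (m+1) ≤ 4*m - 1 := by
  by_contra hc
  push_neg at hc
  have hl1 := X_le_len p (n := 2*m+1) m
  have hl2 := X_le_len p (n := 2*m+1) (m+1)
  have hXm : X p (2*m+1) m = 2*m := by omega
  have hXm1 : X p (2*m+1) (m+1) = 2*m := by omega
  have hrange : (2*m+1) - 1 = 2*m := by omega
  have hfull : ∀ t : ℕ, X p (2*m+1) t = 2*m →
      ∀ i < 2*m, cross (p i) (p (i+1)) t := by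
    intro t ht i hi
    have hsub : range (2*m) ⊆ (range ((2*m+1)-1)).filter (fun i => cross (p i) (p (i+1)) t) := by
      apply Finset.subset_iff.mpr
      intro x hx
      have heq : (range ((2*m+1)-1)).filter (fun i => cross (p i) (p (i+1)) t)
          = range ((2*m+1)-1) := by
        apply Finset.eq_of_subset_of_card_le (Finset.filter_subset _ _)
        rw [card_range]
        unfold X at ht
        omega
      rw [heq, hrange]
      exact hx
    have := hsub (Finset.mem_range.mpr hi)
    simp only [mem_filter] at this
    exact this.2
  have hcm := hfull m hXm
  have hcm1 := hfull (m+1) hXm1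
  have halt : ∀ t, (∀ i < 2*m, cross (p i) (p (i+1)) t) →
      ∀ i ≤ 2*m, (p i < t ↔ (p 0 < t ↔ i % 2 = 0)) := by
    intro t hcr i
    induction i with
    | zero => intro _; omega
    | succ i ih =>
      intro h
      have hc' := hcr i (by omega)
      have hih := ih (by omega)
      unfold cross at hc'
      omega
  have hAm : #((range (2*m+1)).filter (fun i => p i < m)) = m :=
    card_lt p hp hinj (by omega)
  have hAm1 : #((range (2*m+1)).filter (fun i => p i < m+1)) = m+1 :=
    card_lt p hp hinj (by omega)
  have h0m : ¬ p 0 < m := by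
    intro h0
    have : (range (2*m+1)).filter (fun i => p i < m)
        = (range (2*m+1)).filter (fun i => i % 2 = 0) := by
      apply Finset.filter_congr
      intro i hi
      rw [mem_range] at hi
      have := halt m hcm i (by omega)
      omega
    rw [this, card_even_range] at hAm
    omega
  have h0m1 : p 0 < m + 1 := by
    by_contra h0
    have : (range (2*m+1)).filter (fun i => p i < m+1)
        = (range (2*m+1)).filter (fun i => i % 2 = 1) := by
      apply Finset.filter_congr
      intro i hi
      rw [mem_range] at hi
      have := halt (m+1) hcm1 i (by omega)
      omega
    rw [this, card_odd_range] at hAm1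
    omega
  have hend_m : ¬ p (2*m) < m := by
    have := halt m hcm (2*m) le_rfl
    omega
  have hend_m1 : p (2*m) < m + 1 := by
    have := halt (m+1) hcm1 (2*m) le_rfl
    omega
  have h1 : p 0 = m := by omega
  have h2 : p (2*m) = m := by omega
  have := hinj 0 (by omega) (2*m) (by omega) (by omega)
  omega

end PathAux

namespace PathAux

lemma even_total (m : ℕ) (hm : 1 ≤ m) :
    2*(m*(m-1)) + (2*m-1) = (2*m)^2/2 - 1 := by
  obtain ⟨m', rfl⟩ : ∃ m', m = m' + 1 := ⟨m - 1, by omega⟩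
  rw [show (2*(m'+1))^2 = (2*(m'*m') + 4*m' + 2)*2 from by ring,
    Nat.mul_div_cancel _ two_pos,
    show (m'+1)*(m'+1-1) = m'*m' + m' from by simp [Nat.add_sub_cancel]; ring]
  generalize m'*m' = K
  omega

lemma odd_total (m : ℕ) (hm : 1 ≤ m) :
    2*(m*(m-1)) + (4*m-1) = (2*m+1)^2/2 - 1 := by
  obtain ⟨m', rfl⟩ : ∃ m', m = m' + 1 := ⟨m - 1, by omega⟩
  rw [show (2*(m'+1)+1)^2 = (2*(m'*m') + 6*m' + 4)*2 + 1 from by ring]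
  rw [show (2*(m'*m') + 6*m' + 4)*2 + 1 = 1 + (2*(m'*m') + 6*m' + 4)*2 from by ring,
    Nat.add_mul_div_right _ _ two_pos,
    show (m'+1)*(m'+1-1) = m'*m' + m' from by simp [Nat.add_sub_cancel]; ring]
  generalize m'*m' = K
  omega

lemma upper {n : ℕ} (hn : 2 ≤ n) (p : ℕ → ℕ) (hp : ∀ i < n, p i < n)
    (hinj : ∀ i < n, ∀ j < n, p i = p j → i = j) :
    ∑ i ∈ range (n-1), Δ (p i) (p (i+1)) ≤ n^2/2 - 1 := by
  rw [sum_delta_eq p hp]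
  rcases Nat.even_or_odd n with he | ho
  · -- even case
    obtain ⟨m, rfl⟩ : ∃ m, n = 2*m := by rcases he with ⟨k, hk⟩; exact ⟨k, by omega⟩
    have hm : 1 ≤ m := by omega
    have e1 : ∑ t ∈ Ico 1 m, X p (2*m) t + ∑ t ∈ Ico m (2*m), X p (2*m) t
        = ∑ t ∈ Ico 1 (2*m), X p (2*m) t :=
      Finset.sum_Ico_consecutive _ (by omega) (by omega)
    have e2 : ∑ t ∈ Ico m (m+1), X p (2*m) t + ∑ t ∈ Ico (m+1) (2*m), X p (2*m) t
        = ∑ t ∈ Ico m (2*m), X p (2*m) t :=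
      Finset.sum_Ico_consecutive _ (by omega) (by omega)
    have b1 : ∑ t ∈ Ico 1 m, X p (2*m) t ≤ m*(m-1) := by
      calc ∑ t ∈ Ico 1 m, X p (2*m) t ≤ ∑ t ∈ Ico 1 m, 2*t := by
            apply Finset.sum_le_sum
            intro t ht
            rw [mem_Ico] at ht
            exact X_le_two_t p hp hinj (by omega)
        _ = m*(m-1) := sum_two_t m
    have b2 : ∑ t ∈ Ico m (m+1), X p (2*m) t ≤ 2*m - 1 := by
      rw [Finset.sum_Ico_succ_top le_rfl, Finset.Ico_self, Finset.sum_empty, zero_add]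
      exact X_le_len p m
    have b3 : ∑ t ∈ Ico (m+1) (2*m), X p (2*m) t ≤ m*(m-1) := by
      calc ∑ t ∈ Ico (m+1) (2*m), X p (2*m) t ≤ ∑ t ∈ Ico (m+1) (2*m), 2*(2*m - t) := by
            apply Finset.sum_le_sum
            intro t ht
            rw [mem_Ico] at ht
            exact X_le_two_nt p hp hinj (by omega)
        _ = ∑ s ∈ Ico 1 (2*m - (m+1) + 1), 2*s := sum_mirror (m+1) (2*m) (by omega)
        _ = m*(m-1) := by rw [show 2*m - (m+1) + 1 = m from by omega]; exact sum_two_t m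
    rw [← even_total m hm]
    omega
  · -- odd case
    obtain ⟨m, rfl⟩ : ∃ m, n = 2*m+1 := by rcases ho with ⟨k, hk⟩; exact ⟨k, by omega⟩
    have hm : 1 ≤ m := by omega
    have e1 : ∑ t ∈ Ico 1 m, X p (2*m+1) t + ∑ t ∈ Ico m (2*m+1), X p (2*m+1) t
        = ∑ t ∈ Ico 1 (2*m+1), X p (2*m+1) t :=
      Finset.sum_Ico_consecutive _ (by omega) (by omega)
    have e2 : ∑ t ∈ Ico m (m+2), X p (2*m+1) t + ∑ t ∈ Ico (m+2) (2*m+1), X p (2*m+1) t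
        = ∑ t ∈ Ico m (2*m+1), X p (2*m+1) t :=
      Finset.sum_Ico_consecutive _ (by omega) (by omega)
    have b1 : ∑ t ∈ Ico 1 m, X p (2*m+1) t ≤ m*(m-1) := by
      calc ∑ t ∈ Ico 1 m, X p (2*m+1) t ≤ ∑ t ∈ Ico 1 m, 2*t := by
            apply Finset.sum_le_sum
            intro t ht
            rw [mem_Ico] at ht
            exact X_le_two_t p hp hinj (by omega)
        _ = m*(m-1) := sum_two_t m
    have b2 : ∑ t ∈ Ico m (m+2), X p (2*m+1) t ≤ 4*m - 1 := by
      rw [show m + 2 = (m+1) + 1 from rfl, Finset.sum_Ico_succ_top (by omega),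
        Finset.sum_Ico_succ_top le_rfl, Finset.Ico_self, Finset.sum_empty, zero_add]
      exact X_mid_odd hm p hp hinj
    have b3 : ∑ t ∈ Ico (m+2) (2*m+1), X p (2*m+1) t ≤ m*(m-1) := by
      calc ∑ t ∈ Ico (m+2) (2*m+1), X p (2*m+1) t
          ≤ ∑ t ∈ Ico (m+2) (2*m+1), 2*((2*m+1) - t) := by
            apply Finset.sum_le_sum
            intro t ht
            rw [mem_Ico] at ht
            exact X_le_two_nt p hp hinj (by omega)
        _ = ∑ s ∈ Ico 1 ((2*m+1) - (m+2) + 1), 2*s := sum_mirror (m+2) (2*m+1) (by omega)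
        _ = m*(m-1) := by rw [show (2*m+1) - (m+2) + 1 = m from by omega]; exact sum_two_t m
    rw [← odd_total m hm]
    omega

end PathAux

namespace PathAux

def gv (n i : ℕ) : ℕ := if i = 0 then n/2 else if i % 2 = 1 then i/2 else n - i/2

lemma gv_lt {n : ℕ} (hn : 2 ≤ n) : ∀ i < n, gv n i < n := by
  intro i hi
  unfold gv
  split_ifs <;> omega

lemma gv_inj {n : ℕ} (hn : 2 ≤ n) :
    ∀ i < n, ∀ j < n, gv n i = gv n j → i = j := by
  intro i hi j hj h
  unfold gv at h
  split_ifs at h <;> omega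

lemma gv_delta_zero {n : ℕ} (hn : 2 ≤ n) : Δ (gv n 0) (gv n 1) = n/2 := by
  unfold gv Δ
  norm_num

lemma gv_delta {n : ℕ} (hn : 2 ≤ n) {i : ℕ} (h1 : 1 ≤ i) (h2 : i < n - 1) :
    Δ (gv n i) (gv n (i+1)) = n - i := by
  by_cases ho : i % 2 = 1
  · have e1 : gv n i = i/2 := by
      unfold gv
      rw [if_neg (by omega), if_pos ho]
    have e2 : gv n (i+1) = n - (i+1)/2 := by
      unfold gv
      rw [if_neg (by omega), if_neg (by omega)]
    rw [e1, e2]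
    unfold Δ
    omega
  · have e1 : gv n i = n - i/2 := by
      unfold gv
      rw [if_neg (by omega), if_neg ho]
    have e2 : gv n (i+1) = (i+1)/2 := by
      unfold gv
      rw [if_neg (by omega), if_pos (by omega)]
    rw [e1, e2]
    unfold Δ
    omega

lemma lower_val {n : ℕ} (hn : 2 ≤ n) :
    ∑ i ∈ range (n-1), Δ (gv n i) (gv n (i+1)) = n^2/2 - 1 := by
  have hsplit : ∑ i ∈ Ico 0 1, Δ (gv n i) (gv n (i+1))
      + ∑ i ∈ Ico 1 (n-1), Δ (gv n i) (gv n (i+1))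
      = ∑ i ∈ Ico 0 (n-1), Δ (gv n i) (gv n (i+1)) :=
    Finset.sum_Ico_consecutive _ (by omega) (by omega)
  rw [Finset.range_eq_Ico, ← hsplit]
  have h0 : ∑ i ∈ Ico 0 1, Δ (gv n i) (gv n (i+1)) = n/2 := by
    rw [show (1:ℕ) = 0 + 1 from rfl, Finset.sum_Ico_succ_top (by omega), Finset.Ico_self,
      Finset.sum_empty, zero_add]
    exact gv_delta_zero hn
  have h1 : ∑ i ∈ Ico 1 (n-1), Δ (gv n i) (gv n (i+1)) = ∑ i ∈ Ico 1 (n-1), (n - i) := by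
    apply Finset.sum_congr rfl
    intro i hi
    rw [mem_Ico] at hi
    exact gv_delta hn hi.1 hi.2
  -- compute the doubled sum
  have h2 : ∑ t ∈ Ico 1 n, 2*(n - t) = n*(n-1) := by
    rw [sum_mirror 1 n (by omega), show n - 1 + 1 = n from by omega]
    exact sum_two_t n
  have h3 : ∑ t ∈ Ico 1 n, 2*(n - t)
      = ∑ t ∈ Ico 1 (n-1), 2*(n - t) + 2*(n - (n-1)) := by
    have h := Finset.sum_Ico_succ_top (a := 1) (b := n-1) (by omega) (fun t => 2*(n-t))
    rw [show n - 1 + 1 = n from by omega] at h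
    exact h
  have h4 : ∑ t ∈ Ico 1 (n-1), 2*(n - t) = 2 * ∑ t ∈ Ico 1 (n-1), (n - t) :=
    (Finset.mul_sum _ _ _).symm
  have hS : 2 * ∑ t ∈ Ico 1 (n-1), (n - t) = n*(n-1) - 2 := by omega
  have hsq : n^2 = n*(n-1) + n := by
    obtain ⟨k, rfl⟩ : ∃ k, n = k + 1 := ⟨n - 1, by omega⟩
    simp [pow_two, Nat.add_sub_cancel]
    ring
  have hmod : n^2 % 2 = n % 2 := by
    rw [pow_two, Nat.mul_mod]
    have h5 : n % 2 = 0 ∨ n % 2 = 1 := by omega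
    rcases h5 with h5 | h5 <;> rw [h5]
  rw [h0, h1]
  generalize hA : n*(n-1) = A at hS hsq
  generalize hB : n^2 = B at hsq hmod ⊢
  omega

end PathAux

namespace PathAux

def pf {n : ℕ} (π : Equiv.Perm (Fin n)) (i : ℕ) : ℕ :=
  if h : i < n then (π ⟨i, h⟩ : ℕ) else 0

lemma natAbs_delta (a b : ℕ) : ((a:ℤ) - b).natAbs = Δ a b := by
  unfold Δ; omega

lemma pf_eq {n : ℕ} (π : Equiv.Perm (Fin n)) {i : ℕ} (h : i < n) :
    pf π i = (π ⟨i, h⟩ : ℕ) := dif_pos h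

lemma edge_finset_path (n : ℕ) (hn : 2 ≤ n) :
    (pathG n).edgeFinset =
      Finset.image (fun i : Fin (n-1) =>
        s((⟨(i:ℕ), by have := i.isLt; omega⟩ : Fin n),
          (⟨(i:ℕ)+1, by have := i.isLt; omega⟩ : Fin n))) Finset.univ := by
  ext e
  refine Sym2.inductionOn e fun u v => ?_
  simp only [SimpleGraph.mem_edgeFinset, SimpleGraph.mem_edgeSet, Finset.mem_image,
    Finset.mem_univ, true_and]
  constructor
  · intro h
    change (u:ℕ) + 1 = v ∨ (v:ℕ) + 1 = u at h
    rcases h with h | h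
    · refine ⟨⟨(u:ℕ), by have := v.isLt; omega⟩, ?_⟩
      rw [Sym2.eq_iff]
      left
      exact ⟨Fin.ext rfl, Fin.ext h⟩
    · refine ⟨⟨(v:ℕ), by have := u.isLt; omega⟩, ?_⟩
      rw [Sym2.eq_iff]
      right
      exact ⟨Fin.ext rfl, Fin.ext h⟩
  · rintro ⟨i, hi⟩
    rw [Sym2.eq_iff] at hi
    rcases hi with ⟨h1, h2⟩ | ⟨h1, h2⟩
    · change (u:ℕ) + 1 = v ∨ (v:ℕ) + 1 = u
      left
      rw [← h1, ← h2]
    · change (u:ℕ) + 1 = v ∨ (v:ℕ) + 1 = u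
      right
      rw [← h1, ← h2]

lemma D_eq {n : ℕ} (hn : 2 ≤ n) (π : Equiv.Perm (Fin n)) :
    D (pathG n) π = ∑ i ∈ range (n-1), Δ (pf π i) (pf π (i+1)) := by
  unfold D
  rw [edge_finset_path n hn, Finset.sum_image ?hinj]
  case hinj =>
    intro i _ j _ hij
    rw [Sym2.eq_iff] at hij
    apply Fin.ext
    rcases hij with ⟨h1, h2⟩ | ⟨h1, h2⟩ <;>
      · have e1 := congrArg Fin.val h1
        have e2 := congrArg Fin.val h2
        simp only at e1 e2
        omega
  rw [← Fin.sum_univ_eq_sum_range (fun i => Δ (pf π i) (pf π (i+1))) (n-1)]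
  apply Finset.sum_congr rfl
  intro i _
  have h1 : (i : ℕ) < n := by have := i.isLt; omega
  have h2 : (i : ℕ) + 1 < n := by have := i.isLt; omega
  simp only [edgeLen, Sym2.lift_mk]
  rw [pf_eq π h1, pf_eq π h2]
  exact natAbs_delta _ _

end PathAux


namespace PathAux

theorem main (n : ℕ) (hn : 2 ≤ n) : Dmax (pathG n) = n ^ 2 / 2 - 1 := by
  apply le_antisymm
  · apply Finset.sup_le
    intro π _
    rw [D_eq hn π]
    apply upper hn (pf π)
    · intro i hi
      rw [pf_eq π hi]
      exact (π ⟨i, hi⟩).isLt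
    · intro i hi j hj h
      rw [pf_eq π hi, pf_eq π hj] at h
      have h2 := π.injective (Fin.ext h)
      exact congrArg Fin.val h2
  · have hg : Function.Injective (fun i : Fin n => (⟨gv n i, gv_lt hn i i.isLt⟩ : Fin n)) := by
      intro a b h
      exact Fin.ext (gv_inj hn a a.isLt b b.isLt (congrArg Fin.val h))
    let π₀ : Equiv.Perm (Fin n) := Equiv.ofBijective _ (Finite.injective_iff_bijective.mp hg)
    have hval : ∀ i, (hi : i < n) → pf π₀ i = gv n i := by
      intro i hi
      rw [pf_eq π₀ hi]
      rfl
    have hD : D (pathG n) π₀ = n ^ 2 / 2 - 1 := by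
      rw [D_eq hn π₀, ← lower_val hn]
      apply Finset.sum_congr rfl
      intro i hi
      rw [mem_range] at hi
      rw [hval i (by omega), hval (i+1) (by omega)]
    calc n ^ 2 / 2 - 1 = D (pathG n) π₀ := hD.symm
      _ ≤ Dmax (pathG n) := Finset.le_sup (Finset.mem_univ π₀)

end PathAux

/-- For a path graph on `n ≥ 2` vertices, the maximum over all linear
arrangements of the sum of edge lengths equals `⌊n²/2⌋ - 1`. -/
theorem pathG_Dmax (n : ℕ) (hn : 2 ≤ n) :
    Dmax (pathG n) = n ^ 2 / 2 - 1 := PathAux.main n hn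
end

section
/- For a star tree on n ≥ 2 vertices, the maximum over all linear arrangements of the sum of edge lengths equals n(n-1)/2. -/
open Finset

lemma sum_abs_le (n a : ℕ) (ha : a < n) :
    ∑ x ∈ Finset.range n, ((a:ℤ) - x).natAbs ≤ n * (n-1) / 2 := by
  rw [Finset.range_eq_Ico, ← Finset.sum_Ico_consecutive _ (Nat.zero_le a) ha.le]
  have h1 : ∑ x ∈ Finset.Ico 0 a, ((a:ℤ) - x).natAbs = ∑ x ∈ Finset.range a, (a - x) := by
    rw [← Finset.range_eq_Ico]
    exact Finset.sum_congr rfl fun x hx => by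
      have := Finset.mem_range.1 hx; omega
  have h2 : ∑ x ∈ Finset.Ico a n, ((a:ℤ) - x).natAbs = ∑ x ∈ Finset.Ico a n, (x - a) := by
    exact Finset.sum_congr rfl fun x hx => by
      have := (Finset.mem_Ico.1 hx).1; omega
  rw [h1, h2]
  have h3 : ∑ x ∈ Finset.range a, (a - x) = (∑ x ∈ Finset.range a, x) + a := by
    rw [← Finset.sum_range_reflect]
    have : ∀ j ∈ Finset.range a, a - (a - 1 - j) = j + 1 := fun j hj => by
      have := Finset.mem_range.1 hj; omega
    rw [Finset.sum_congr rfl this, Finset.sum_add_distrib, Finset.sum_const,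
      Finset.card_range, smul_eq_mul, mul_one]
  have h4 : ∑ x ∈ Finset.Ico a n, (x - a) = ∑ k ∈ Finset.range (n - a), k := by
    rw [Finset.sum_Ico_eq_sum_range]
    exact Finset.sum_congr rfl fun k _ => by omega
  rw [h3, h4]
  obtain ⟨b, rfl⟩ : ∃ b, n = a + 1 + b := ⟨n - a - 1, by omega⟩
  have g1 := Finset.sum_range_id_mul_two a
  have g2 := Finset.sum_range_id_mul_two (a + 1 + b - a)
  have g3 := Finset.sum_range_id_mul_two (a + 1 + b)
  set S1 := ∑ x ∈ Finset.range a, x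
  set S2 := ∑ k ∈ Finset.range (a + 1 + b - a), k
  set S3 := ∑ k ∈ Finset.range (a + 1 + b), k
  have : (a+1+b) * (a+1+b-1) / 2 = S3 := by omega
  rw [this]
  have e2 : a + 1 + b - a = b + 1 := by omega
  have e3 : a + 1 + b - 1 = a + b := by omega
  have e4 : b + 1 - 1 = b := rfl
  rw [e2, e4] at g2
  rw [e3] at g3
  rcases a with _ | c
  · simp at g2 g3 ⊢
    nlinarith
  · have e1 : c + 1 - 1 = c := rfl
    rw [e1] at g1
    nlinarith

lemma star_edgeFinset (n : ℕ) (hn : 2 ≤ n) :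
    (starG n).edgeFinset =
      (Finset.univ.erase (⟨0, by omega⟩ : Fin n)).image (fun v => s(⟨0, by omega⟩, v)) := by
  ext e
  induction e using Sym2.ind with
  | _ u v =>
    rw [SimpleGraph.mem_edgeFinset, SimpleGraph.mem_edgeSet]
    simp only [SimpleGraph.mem_edgeFinset, SimpleGraph.mem_edgeSet, starG, Finset.mem_image,
      Finset.mem_erase, Finset.mem_univ, and_true]
    constructor
    · rintro ⟨hne, h | h⟩
      · have hu : u = ⟨0, by omega⟩ := by ext; exact h
        exact ⟨v, by rintro rfl; exact hne (hu.trans rfl), by rw [hu]⟩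
      · have hv : v = ⟨0, by omega⟩ := by ext; exact h
        refine ⟨u, by rintro rfl; exact hne (hv.trans rfl).symm, ?_⟩
        rw [hv, Sym2.eq_swap]
    · rintro ⟨w, hw, hsw⟩
      rw [Sym2.eq_iff] at hsw
      rcases hsw with ⟨h1, h2⟩ | ⟨h1, h2⟩
      · refine ⟨?_, Or.inl (congrArg Fin.val h1).symm⟩
        rintro rfl; exact hw (h2.trans h1.symm)
      · refine ⟨?_, Or.inr (congrArg Fin.val h1).symm⟩
        rintro rfl; exact hw (h2.trans h1.symm)

lemma D_star (n : ℕ) (hn : 2 ≤ n) (π : Equiv.Perm (Fin n)) :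
    D (starG n) π =
      ∑ x ∈ Finset.range n, (((π ⟨0, by omega⟩ : Fin n) : ℤ) - x).natAbs := by
  set z : Fin n := ⟨0, by omega⟩
  rw [show (∑ x ∈ Finset.range n, (((π z : Fin n) : ℤ) - x).natAbs)
      = ∑ x : Fin n, (((π z : Fin n) : ℤ) - x).natAbs from
    (Fin.sum_univ_eq_sum_range _ n).symm]
  have hcomp : ∑ x : Fin n, (((π z : Fin n) : ℤ) - x).natAbs
      = ∑ v : Fin n, (((π z : Fin n) : ℤ) - π v).natAbs :=
    (Equiv.sum_comp π fun x => (((π z : Fin n) : ℤ) - x).natAbs).symm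
  rw [hcomp]
  rw [D, star_edgeFinset n hn, Finset.sum_image]
  · rw [← Finset.sum_erase Finset.univ (f := fun v => (((π z : Fin n) : ℤ) - π v).natAbs)
      (a := z) (by simp)]
    exact Finset.sum_congr rfl fun v _ => by simp [edgeLen, z]
  · intro a _ b _ hab
    rw [Sym2.eq_iff] at hab
    rcases hab with ⟨_, h⟩ | ⟨h1, h2⟩
    · exact h
    · exact h2.trans h1

/-- For a star tree on `n ≥ 2` vertices, the maximum over all linear
arrangements of the sum of edge lengths equals `n(n-1)/2`. -/
theorem starG_Dmax (n : ℕ) (hn : 2 ≤ n) :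
    Dmax (starG n) = n * (n - 1) / 2 := by
  apply le_antisymm
  · apply Finset.sup_le
    intro π _
    rw [D_star n hn π]
    exact sum_abs_le n _ (π ⟨0, by omega⟩).isLt
  · have h := Finset.le_sup (f := D (starG n)) (Finset.mem_univ (Equiv.refl (Fin n)))
    have heq : D (starG n) (Equiv.refl (Fin n)) = n * (n - 1) / 2 := by
      rw [D_star n hn]
      have : ∀ x ∈ Finset.range n,
          (((Equiv.refl (Fin n) ⟨0, by omega⟩ : Fin n) : ℤ) - x).natAbs = x := by
        intro x _; simp
      rw [Finset.sum_congr rfl this]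
      exact Finset.sum_range_id n
    rw [← heq]
    exact h
end

section
/- For a star tree on n ≥ 1 vertices, the minimum over all linear arrangements of the sum of edge lengths equals ⌊n²/4⌋, equivalently (n² - (n mod 2))/4. -/
open Finset

lemma natAbs_sub_nat (a b : ℕ) : ((a:ℤ) - b).natAbs = (a - b) + (b - a) := by omega

lemma sum_abs_formula (n p : ℕ) (hp : p < n) :
    2 * ∑ j ∈ range n, ((p:ℤ) - (j:ℤ)).natAbs = (p+1)*p + (n-p)*(n-p-1) := by
  have h1 : ∑ j ∈ range n, ((p:ℤ) - (j:ℤ)).natAbs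
      = (∑ j ∈ range n, (p - j)) + ∑ j ∈ range n, (j - p) := by
    rw [← Finset.sum_add_distrib]
    exact Finset.sum_congr rfl fun j _ => natAbs_sub_nat p j
  have h2 : ∑ j ∈ range n, (p - j) = ∑ j ∈ range (p+1), (p - j) := by
    symm
    apply Finset.sum_subset (Finset.range_subset_range.2 hp)
    intro j _ hj
    simp only [Finset.mem_range] at hj
    omega
  have h3 : ∑ j ∈ range (p+1), (p - j) = ∑ j ∈ range (p+1), j := by
    rw [← Finset.sum_range_reflect]
    refine Finset.sum_congr rfl fun j hj => ?_
    simp only [Finset.mem_range] at hj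
    omega
  have h4 : ∑ j ∈ range n, (j - p) = ∑ j ∈ Finset.Ico p n, (j - p) := by
    symm
    apply Finset.sum_subset
    · intro j hj; simp only [Finset.mem_Ico] at hj; simp only [Finset.mem_range]; omega
    · intro j hj1 hj2; simp only [Finset.mem_range] at hj1; simp only [Finset.mem_Ico] at hj2; omega
  have h5 : ∑ j ∈ Finset.Ico p n, (j - p) = ∑ i ∈ range (n - p), i := by
    rw [Finset.sum_Ico_eq_sum_range]
    exact Finset.sum_congr rfl fun i _ => by omega
  have g1 : (∑ j ∈ range (p+1), j) * 2 = (p+1)*p := by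
    simpa using Finset.sum_range_id_mul_two (p+1)
  have g2 : (∑ i ∈ range (n-p), i) * 2 = (n-p)*(n-p-1) := Finset.sum_range_id_mul_two (n-p)
  rw [h1, h2, h3, h4, h5]
  linarith

lemma star_D (n : ℕ) (hn : 0 < n) (π : Equiv.Perm (Fin n)) :
    D (starG n) π = ∑ j ∈ range n, (((π ⟨0, hn⟩ : Fin n) : ℤ) - (j:ℤ)).natAbs := by
  set z : Fin n := ⟨0, hn⟩ with hz
  have hedge : (starG n).edgeFinset
      = (univ.filter (fun v : Fin n => v ≠ z)).image (fun v => s(z, v)) := by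
    ext e
    refine Sym2.inductionOn e fun a b => ?_
    rw [SimpleGraph.mem_edgeFinset, SimpleGraph.mem_edgeSet]
    simp only [SimpleGraph.mem_edgeFinset, SimpleGraph.mem_edgeSet, starG, Finset.mem_image,
      Finset.mem_filter, Finset.mem_univ, true_and]
    constructor
    · rintro ⟨hab, h | h⟩
      · have ha : a = z := by apply Fin.ext; simpa [hz] using h
        exact ⟨b, by rintro rfl; exact hab ha, by rw [ha]⟩
      · have hb : b = z := by apply Fin.ext; simpa [hz] using h
        exact ⟨a, by rintro rfl; exact hab hb.symm, by rw [hb, Sym2.eq_swap]⟩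
    · rintro ⟨v, hv, he⟩
      rw [Sym2.eq_iff] at he
      rcases he with ⟨rfl, rfl⟩ | ⟨rfl, rfl⟩
      · exact ⟨fun h => hv h.symm, Or.inl rfl⟩
      · exact ⟨hv, Or.inr rfl⟩
  have hinj : ∀ x ∈ univ.filter (fun v : Fin n => v ≠ z), ∀ y ∈ univ.filter (fun v : Fin n => v ≠ z),
      s(z, x) = s(z, y) → x = y := by
    intro x hx y hy h
    simp only [Finset.mem_filter, Finset.mem_univ, true_and] at hx hy
    rw [Sym2.eq_iff] at h
    rcases h with ⟨-, h⟩ | ⟨h1, h2⟩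
    · exact h
    · exact absurd h2.symm (Ne.symm hx)
  rw [D, hedge, Finset.sum_image hinj]
  have hstep : ∑ v ∈ univ.filter (fun v : Fin n => v ≠ z), edgeLen π s(z, v)
      = ∑ v : Fin n, ((π z : ℤ) - (π v : ℤ)).natAbs := by
    rw [show (∑ v : Fin n, ((π z : ℤ) - (π v : ℤ)).natAbs)
        = ∑ v : Fin n, edgeLen π s(z, v) from rfl]
    apply Finset.sum_subset (Finset.filter_subset _ _)
    intro v _ hv
    simp only [Finset.mem_filter, Finset.mem_univ, true_and, not_not] at hv
    subst hv
    simp [edgeLen]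
  rw [hstep]
  have hre : ∑ v : Fin n, ((π z : ℤ) - (π v : ℤ)).natAbs
      = ∑ w : Fin n, ((π z : ℤ) - (w : ℤ)).natAbs :=
    Equiv.sum_comp π (fun w : Fin n => ((π z : ℤ) - (w : ℤ)).natAbs)
  rw [hre, ← Fin.sum_univ_eq_sum_range (fun j => ((π z : ℤ) - (j:ℤ)).natAbs)]

set_option maxHeartbeats 1000000 in
/-- For a star tree on `n ≥ 1` vertices, the minimum over all linear
arrangements of the sum of edge lengths equals `⌊n²/4⌋ = (n² - (n mod 2))/4`. -/
theorem starG_Dmin (n : ℕ) (hn : 1 ≤ n) :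
    Dmin (starG n) = n ^ 2 / 4 ∧ n ^ 2 / 4 = (n ^ 2 - n % 2) / 4 := by
  have hn0 : 0 < n := hn
  obtain ⟨N, hN⟩ : ∃ N, N = n ^ 2 := ⟨_, rfl⟩
  obtain ⟨m, hm⟩ : ∃ m, N = 4 * m + n % 2 := by
    rcases Nat.even_or_odd n with ⟨k, hk⟩ | ⟨k, hk⟩
    · refine ⟨k * k, ?_⟩
      have h2 : n % 2 = 0 := by omega
      rw [hN, h2, hk]; ring
    · refine ⟨k * k + k, ?_⟩
      have h2 : n % 2 = 1 := by omega
      rw [hN, h2, hk]; ring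
  have hmZ : (N : ℤ) = 4 * m + ((n % 2 : ℕ) : ℤ) := by exact_mod_cast hm
  -- lower bound for every hub position p
  have key : ∀ p : ℕ, p < n → m ≤ ∑ j ∈ range n, ((p:ℤ) - (j:ℤ)).natAbs := by
    intro p hp
    set S := ∑ j ∈ range n, ((p:ℤ) - (j:ℤ)).natAbs with hSdef
    have hS := sum_abs_formula n p hp
    rw [← hSdef] at hS
    obtain ⟨q, hq⟩ : ∃ q, n = p + q + 1 := ⟨n - p - 1, by omega⟩
    have e2 : n - p - 1 = q := by omega
    have e1 : n - p = q + 1 := by omega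
    rw [e2, e1] at hS
    have hZ : (2 : ℤ) * S = ((p:ℤ)+1)*p + ((q:ℤ)+1)*q := by
      have h := congrArg (Nat.cast : ℕ → ℤ) hS
      push_cast at h
      linear_combination h
    have hNZ : (N : ℤ) = ((p:ℤ) + q + 1)^2 := by
      rw [hN, hq]; push_cast; ring
    suffices h : (4 : ℤ) * m ≤ 4 * S by
      have : (m : ℤ) ≤ S := by linarith
      exact_mod_cast this
    rcases Nat.even_or_odd n with ⟨k, hk⟩ | ⟨k, hk⟩
    · have hne : p ≠ q := by omega
      have h1 : (1:ℤ) ≤ ((p:ℤ) - q)^2 := by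
        have h2 : (p:ℤ) - q ≤ -1 ∨ 1 ≤ (p:ℤ) - q := by
          rcases lt_or_gt_of_ne hne with h | h
          · left; have : (p:ℤ) < q := by exact_mod_cast h
            linarith
          · right; have : (q:ℤ) < p := by exact_mod_cast h
            linarith
        rcases h2 with h | h <;> nlinarith [h]
      have hmod : (n % 2 : ℕ) = 0 := by omega
      rw [hmod] at hmZ
      push_cast at hmZ
      have expand : (4:ℤ)*S - ((p:ℤ)+q+1)^2 = ((p:ℤ)-q)^2 - 1 := by
        linear_combination 2 * hZ
      linarith [h1, expand, hmZ, hNZ]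
    · have hmod : (n % 2 : ℕ) = 1 := by omega
      rw [hmod] at hmZ
      push_cast at hmZ
      have expand : (4:ℤ)*S - ((p:ℤ)+q+1)^2 = ((p:ℤ)-q)^2 - 1 := by
        linear_combination 2 * hZ
      linarith [sq_nonneg ((p:ℤ) - q), expand, hmZ, hNZ]
  -- exact value at hub position n/2
  have key2 : ∑ j ∈ range n, (((n/2 : ℕ):ℤ) - (j:ℤ)).natAbs = m := by
    set S := ∑ j ∈ range n, (((n/2 : ℕ):ℤ) - (j:ℤ)).natAbs with hSdef
    have hp : n / 2 < n := by omega
    have hS := sum_abs_formula n (n/2) hp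
    rw [← hSdef] at hS
    rcases Nat.even_or_odd n with ⟨k, hk⟩ | ⟨k, hk⟩
    · obtain ⟨l, hl⟩ : ∃ l, k = l + 1 := ⟨k - 1, by omega⟩
      have e3 : n - n/2 - 1 = l := by omega
      have e2 : n - n/2 = l + 1 := by omega
      have e1 : n / 2 = l + 1 := by omega
      rw [e3, e2, e1] at hS
      have hZ : (2 : ℤ) * S = ((l:ℤ)+2)*((l:ℤ)+1) + ((l:ℤ)+1)*l := by
        have h := congrArg (Nat.cast : ℕ → ℤ) hS
        push_cast at h
        linear_combination h
      have hmod : (n % 2 : ℕ) = 0 := by omega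
      rw [hmod] at hmZ
      have hNZ : (N : ℤ) = (2*(l:ℤ)+2)^2 := by
        rw [hN]; have : n = 2*l + 2 := by omega
        rw [this]; push_cast; ring
      have h4 : (4:ℤ) * S = 4 * m := by
        have hx : (4:ℤ) * m = (N:ℤ) := by omega
        linear_combination 2 * hZ - hNZ - hx
      have : (S : ℤ) = m := by linarith
      exact_mod_cast this
    · have e3 : n - n/2 - 1 = k := by omega
      have e2 : n - n/2 = k + 1 := by omega
      have e1 : n / 2 = k := by omega
      rw [e3, e2, e1] at hS
      have hZ : (2 : ℤ) * S = ((k:ℤ)+1)*k + ((k:ℤ)+1)*k := by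
        have h := congrArg (Nat.cast : ℕ → ℤ) hS
        push_cast at h
        linear_combination h
      have hmod : (n % 2 : ℕ) = 1 := by omega
      rw [hmod] at hmZ
      have hNZ : (N : ℤ) = (2*(k:ℤ)+1)^2 := by
        rw [hN]; have : n = 2*k + 1 := by omega
        rw [this]; push_cast; ring
      have h4 : (4:ℤ) * S = 4 * m := by
        have hx : (4:ℤ) * m = (N:ℤ) - 1 := by omega
        linear_combination 2 * hZ - hNZ - hx
      have : (S : ℤ) = m := by linarith
      exact_mod_cast this
  -- assemble
  have hDm : Dmin (starG n) = m := by
    apply le_antisymm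
    · have hval : D (starG n) (Equiv.swap ⟨0, hn0⟩ (⟨n/2, by omega⟩ : Fin n)) = m := by
        rw [star_D n hn0]
        rw [Equiv.swap_apply_left]
        exact key2
      calc Dmin (starG n) ≤ D (starG n) (Equiv.swap ⟨0, hn0⟩ (⟨n/2, by omega⟩ : Fin n)) :=
            Finset.inf'_le _ (Finset.mem_univ _)
        _ = m := hval
    · apply Finset.le_inf'
      intro π _
      rw [star_D n hn0 π]
      exact key _ (π ⟨0, hn0⟩).isLt
  constructor
  · rw [hDm, ← hN]; omega
  · rw [← hN]; omega
end

section
/- For a bistar tree on n vertices with hub degrees k₁ and n - k₁ (k₁ ≥ n - k₁ ≥ 1), the maximum over all linear arrangements of the sum of edge lengths equals k₁(n - k₁) + n(n-3)/2 + 1. -/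
open Finset

lemma topsum : ∀ (N : ℕ) (S : Finset ℕ), (∀ x ∈ S, x ≤ N) →
    2 * (∑ x ∈ S, x) + S.card * S.card ≤ S.card * (2*N+1) := by
  intro N
  induction N with
  | zero =>
    intro S hS
    have hsub : S ⊆ {0} := by intro x hx; simp [Nat.le_zero.mp (hS x hx)]
    have hc : S.card ≤ 1 := le_trans (Finset.card_le_card hsub) (by simp)
    have hsum : (∑ x ∈ S, x) = 0 := Finset.sum_eq_zero fun x hx => Nat.le_zero.mp (hS x hx)
    nlinarith [Finset.card S]
  | succ N ih =>
    intro S hS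
    by_cases hN : N + 1 ∈ S
    · have h1 : ∀ x ∈ S.erase (N+1), x ≤ N := by
        intro x hx
        have := hS x (Finset.mem_of_mem_erase hx)
        have := Finset.ne_of_mem_erase hx
        omega
      have ih' := ih (S.erase (N+1)) h1
      have hc : (S.erase (N+1)).card = S.card - 1 := Finset.card_erase_of_mem hN
      have hc1 : 1 ≤ S.card := Finset.card_pos.mpr ⟨_, hN⟩
      have hsum : (∑ x ∈ S.erase (N+1), x) + (N+1) = ∑ x ∈ S, x :=
        Finset.sum_erase_add S _ hN
      obtain ⟨c, hcc⟩ : ∃ c, S.card = c + 1 := ⟨S.card - 1, by omega⟩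
      rw [hc, hcc] at ih'
      simp only [Nat.add_sub_cancel] at ih'
      rw [hcc]
      nlinarith [ih', hsum]
    · exact le_trans (ih S (fun x hx => by
        have := hS x hx; have : x ≠ N+1 := fun h => hN (h ▸ hx); omega))
        (by nlinarith [Finset.card S])

def coreLHS (p q : ℕ) (S T : Finset ℕ) : ℕ :=
  ((p:ℤ) - q).natAbs + (∑ x ∈ S, ((p:ℤ) - x).natAbs) + ∑ y ∈ T, ((q:ℤ) - y).natAbs

def Hyp (n p q : ℕ) (S T : Finset ℕ) : Prop :=
  2 ≤ n ∧ p < n ∧ q < n ∧ p ≠ q ∧ Disjoint S T ∧ p ∉ S ∧ p ∉ T ∧ q ∉ S ∧ q ∉ T ∧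
    insert p (insert q (S ∪ T)) = Finset.range n

def Bound (n p q : ℕ) (S T : Finset ℕ) : Prop :=
  2 * coreLHS p q S T ≤ 2*(S.card+1)*(T.card+1) + (n-1)*(n-2)

lemma coreLHS_comm (p q : ℕ) (S T : Finset ℕ) : coreLHS p q S T = coreLHS q p T S := by
  unfold coreLHS
  have e : ((p:ℤ) - q).natAbs = ((q:ℤ) - p).natAbs := by omega
  rw [e]
  ring

lemma hyp_comm {n p q : ℕ} {S T : Finset ℕ} (h : Hyp n p q S T) : Hyp n q p T S := by
  obtain ⟨h1, h2, h3, h4, h5, h6, h7, h8, h9, h10⟩ := h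
  refine ⟨h1, h3, h2, h4.symm, h5.symm, h9, h8, h7, h6, ?_⟩
  rw [Finset.insert_comm, Finset.union_comm]
  exact h10

lemma bound_comm {n p q : ℕ} {S T : Finset ℕ} (h : Bound n q p T S) : Bound n p q S T := by
  unfold Bound at *
  rw [coreLHS_comm]
  calc 2 * coreLHS q p T S ≤ 2*(T.card+1)*(S.card+1) + (n-1)*(n-2) := h
    _ = 2*(S.card+1)*(T.card+1) + (n-1)*(n-2) := by ring

lemma hyp_mem {n p q : ℕ} {S T : Finset ℕ} (h : Hyp n p q S T) :
    ∀ z, z < n ↔ (z = p ∨ z = q ∨ z ∈ S ∨ z ∈ T) := by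
  intro z
  rw [← Finset.mem_range, ← h.2.2.2.2.2.2.2.2.2]
  simp [Finset.mem_insert, Finset.mem_union]

lemma hyp_card {n p q : ℕ} {S T : Finset ℕ} (h : Hyp n p q S T) :
    n = S.card + T.card + 2 := by
  obtain ⟨h1, h2, h3, h4, h5, h6, h7, h8, h9, h10⟩ := h
  have hq : q ∉ S ∪ T := by simp [Finset.mem_union, h8, h9]
  have hp : p ∉ insert q (S ∪ T) := by simp [Finset.mem_insert, Finset.mem_union, h4, h6, h7]
  have := congrArg Finset.card h10
  rw [Finset.card_insert_of_notMem hp, Finset.card_insert_of_notMem hq,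
    Finset.card_union_of_disjoint h5, Finset.card_range] at this
  omega

lemma hyp_refl {n p q : ℕ} {S T : Finset ℕ} (h : Hyp n p q S T) :
    Hyp n (n-1-p) (n-1-q) (S.image (fun z => n-1-z)) (T.image (fun z => n-1-z)) := by
  have hmem := hyp_mem h
  have hSn : ∀ x ∈ S, x < n := fun x hx => (hmem x).mpr (Or.inr (Or.inr (Or.inl hx)))
  have hTn : ∀ y ∈ T, y < n := fun y hy => (hmem y).mpr (Or.inr (Or.inr (Or.inr hy)))
  obtain ⟨h1, h2, h3, h4, h5, h6, h7, h8, h9, h10⟩ := h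
  refine ⟨h1, by omega, by omega, by omega, ?_, ?_, ?_, ?_, ?_, ?_⟩
  · rw [Finset.disjoint_left]
    rintro z hz1 hz2
    simp only [Finset.mem_image] at hz1 hz2
    obtain ⟨x, hx, hxe⟩ := hz1
    obtain ⟨y, hy, hye⟩ := hz2
    have := hSn x hx; have := hTn y hy
    have : x = y := by omega
    exact (Finset.disjoint_left.mp h5 hx) (this ▸ hy)
  · simp only [Finset.mem_image]; rintro ⟨x, hx, hxe⟩
    have := hSn x hx
    have : x = p := by omega
    exact h6 (this ▸ hx)
  · simp only [Finset.mem_image]; rintro ⟨y, hy, hye⟩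
    have := hTn y hy
    have : y = p := by omega
    exact h7 (this ▸ hy)
  · simp only [Finset.mem_image]; rintro ⟨x, hx, hxe⟩
    have := hSn x hx
    have : x = q := by omega
    exact h8 (this ▸ hx)
  · simp only [Finset.mem_image]; rintro ⟨y, hy, hye⟩
    have := hTn y hy
    have : y = q := by omega
    exact h9 (this ▸ hy)
  · have : (Finset.range n).image (fun z => n-1-z) = Finset.range n := by
      ext w
      simp only [Finset.mem_image, Finset.mem_range]
      constructor
      · rintro ⟨z, hz, rfl⟩; omega
      · intro hw; exact ⟨n-1-w, by omega, by omega⟩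
    rw [← this, ← h10]
    rw [Finset.image_insert, Finset.image_insert, Finset.image_union]

lemma coreLHS_refl {n p q : ℕ} {S T : Finset ℕ} (h : Hyp n p q S T) :
    coreLHS (n-1-p) (n-1-q) (S.image (fun z => n-1-z)) (T.image (fun z => n-1-z))
      = coreLHS p q S T := by
  have hmem := hyp_mem h
  have hSn : ∀ x ∈ S, x < n := fun x hx => (hmem x).mpr (Or.inr (Or.inr (Or.inl hx)))
  have hTn : ∀ y ∈ T, y < n := fun y hy => (hmem y).mpr (Or.inr (Or.inr (Or.inr hy)))
  obtain ⟨h1, h2, h3, _⟩ := h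
  unfold coreLHS
  have e1 : (((n-1-p : ℕ):ℤ) - ((n-1-q:ℕ):ℤ)).natAbs = ((p:ℤ) - q).natAbs := by omega
  have e2 : (∑ x ∈ S.image (fun z => n-1-z), (((n-1-p:ℕ):ℤ) - x).natAbs)
      = ∑ x ∈ S, ((p:ℤ) - x).natAbs := by
    rw [Finset.sum_image (by intro x hx y hy hxy; have := hSn x hx; have := hSn y hy; simp only at hxy; omega)]
    apply Finset.sum_congr rfl
    intro x hx
    have := hSn x hx
    omega
  have e3 : (∑ y ∈ T.image (fun z => n-1-z), (((n-1-q:ℕ):ℤ) - y).natAbs)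
      = ∑ y ∈ T, ((q:ℤ) - y).natAbs := by
    rw [Finset.sum_image (by intro x hx y hy hxy; have := hTn x hx; have := hTn y hy; simp only at hxy; omega)]
    apply Finset.sum_congr rfl
    intro y hy
    have := hTn y hy
    omega
  rw [e1, e2, e3]

lemma bound_refl {n p q : ℕ} {S T : Finset ℕ} (h : Hyp n p q S T)
    (hb : Bound n (n-1-p) (n-1-q) (S.image (fun z => n-1-z)) (T.image (fun z => n-1-z))) :
    Bound n p q S T := by
  have hmem := hyp_mem h
  have hSn : ∀ x ∈ S, x < n := fun x hx => (hmem x).mpr (Or.inr (Or.inr (Or.inl hx)))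
  have hTn : ∀ y ∈ T, y < n := fun y hy => (hmem y).mpr (Or.inr (Or.inr (Or.inr hy)))
  unfold Bound at *
  rw [coreLHS_refl h] at hb
  rwa [Finset.card_image_of_injOn (by
      intro x hx y hy hxy
      simp only at hxy
      have := hSn x hx; have := hSn y hy; omega),
    Finset.card_image_of_injOn (by
      intro x hx y hy hxy
      simp only at hxy
      have := hTn x hx; have := hTn y hy; omega)] at hb

lemma eraseStep {n p q : ℕ} {S T : Finset ℕ} (h : Hyp n p q S T) (hA : n - 1 ∈ S)
    (ihn : ∀ p q S T, Hyp (n-1) p q S T → Bound (n-1) p q S T) : Bound n p q S T := by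
  have hmem := hyp_mem h
  have hcard := hyp_card h
  have hSn : ∀ x ∈ S, x < n := fun x hx => (hmem x).mpr (Or.inr (Or.inr (Or.inl hx)))
  have hTn : ∀ y ∈ T, y < n := fun y hy => (hmem y).mpr (Or.inr (Or.inr (Or.inr hy)))
  obtain ⟨h1, h2, h3, h4, h5, h6, h7, h8, h9, h10⟩ := h
  have hscard : 1 ≤ S.card := Finset.card_pos.mpr ⟨_, hA⟩
  have hn3 : 3 ≤ n := by omega
  have hpn : p ≠ n - 1 := fun hc => h6 (hc ▸ hA)
  have hqn : q ≠ n - 1 := fun hc => h8 (hc ▸ hA)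
  have hTn1 : n - 1 ∉ T := Finset.disjoint_left.mp h5 hA
  have hyp' : Hyp (n-1) p q (S.erase (n-1)) T := by
    refine ⟨by omega, by omega, by omega, h4,
      Finset.disjoint_of_subset_left (Finset.erase_subset _ _) h5,
      fun hc => h6 (Finset.mem_of_mem_erase hc), h7,
      fun hc => h8 (Finset.mem_of_mem_erase hc), h9, ?_⟩
    ext z
    simp only [Finset.mem_insert, Finset.mem_union, Finset.mem_erase, Finset.mem_range]
    constructor
    · rintro (rfl | rfl | ⟨hz1, hz2⟩ | hz)
      · omega
      · omega
      · have := hSn z hz2; omega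
      · have := hTn z hz
        have : z ≠ n - 1 := fun hc => hTn1 (hc ▸ hz)
        omega
    · intro hz
      have : z < n := by omega
      rcases (hmem z).mp this with rfl | rfl | hzS | hzT
      · left; rfl
      · right; left; rfl
      · right; right; left; exact ⟨by omega, hzS⟩
      · right; right; right; exact hzT
  have hb := ihn p q (S.erase (n-1)) T hyp'
  unfold Bound coreLHS at hb ⊢
  have hsplit : (∑ x ∈ S.erase (n-1), ((p:ℤ) - x).natAbs) + ((p:ℤ) - ((n-1:ℕ):ℤ)).natAbs
      = ∑ x ∈ S, ((p:ℤ) - x).natAbs := Finset.sum_erase_add S _ hA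
  have hcS' : (S.erase (n-1)).card = S.card - 1 := Finset.card_erase_of_mem hA
  have he : ((p:ℤ) - ((n-1:ℕ):ℤ)).natAbs ≤ n - 1 := by omega
  obtain ⟨s', hs'⟩ : ∃ s', S.card = s' + 1 := ⟨S.card - 1, by omega⟩
  rw [hcS', hs'] at hb
  simp only [Nat.add_sub_cancel] at hb
  rw [hs']
  set t := T.card
  have e1 : n - 1 = s' + t + 2 := by omega
  have e2 : n - 2 = s' + t + 1 := by omega
  have e3 : n - 1 - 1 = s' + t + 1 := by omega
  have e4 : n - 1 - 2 = s' + t := by omega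
  rw [e3, e4] at hb
  rw [e1, e2]
  nlinarith [hb, he, hsplit]

lemma baseCase {n : ℕ} {S T : Finset ℕ} (h : Hyp n 0 (n-1) S T) : Bound n 0 (n-1) S T := by
  have hmem := hyp_mem h
  have hcard := hyp_card h
  obtain ⟨h1, h2, h3, h4, h5, h6, h7, h8, h9, h10⟩ := h
  have hSb : ∀ x ∈ S, 1 ≤ x ∧ x ≤ n - 2 := by
    intro x hx
    have hxn : x < n := (hmem x).mpr (Or.inr (Or.inr (Or.inl hx)))
    have : x ≠ 0 := fun hc => h6 (hc ▸ hx)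
    have : x ≠ n - 1 := fun hc => h8 (hc ▸ hx)
    omega
  have hTb : ∀ y ∈ T, 1 ≤ y ∧ y ≤ n - 2 := by
    intro y hy
    have hyn : y < n := (hmem y).mpr (Or.inr (Or.inr (Or.inr hy)))
    have : y ≠ 0 := fun hc => h7 (hc ▸ hy)
    have : y ≠ n - 1 := fun hc => h9 (hc ▸ hy)
    omega
  unfold Bound coreLHS
  have e0 : (((0:ℕ):ℤ) - ((n-1:ℕ):ℤ)).natAbs = n - 1 := by omega
  have eS : (∑ x ∈ S, (((0:ℕ):ℤ) - x).natAbs) = ∑ x ∈ S, x := by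
    apply Finset.sum_congr rfl; intro x hx; omega
  have eT : (∑ y ∈ T, (((n-1:ℕ):ℤ) - y).natAbs) = ∑ y ∈ T, (n - 1 - y) := by
    apply Finset.sum_congr rfl
    intro y hy
    have := hTb y hy
    omega
  rw [e0, eS, eT]
  -- image trick for T
  have hTinj : ∀ x ∈ T, ∀ y ∈ T, n - 1 - x = n - 1 - y → x = y := by
    intro x hx y hy hxy
    have := hTb x hx; have := hTb y hy; omega
  have eT2 : (∑ y ∈ T, (n - 1 - y)) = ∑ z ∈ T.image (fun y => n - 1 - y), z := by
    rw [Finset.sum_image hTinj]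
  have hT'card : (T.image (fun y => n - 1 - y)).card = T.card :=
    Finset.card_image_of_injOn (by intro x hx y hy hxy; simp only at hxy; exact hTinj x hx y hy hxy)
  have htopS := topsum (n-2) S (fun x hx => (hSb x hx).2)
  have htopT := topsum (n-2) (T.image (fun y => n - 1 - y)) (by
    intro z hz
    simp only [Finset.mem_image] at hz
    obtain ⟨y, hy, rfl⟩ := hz
    have := hTb y hy
    omega)
  rw [hT'card] at htopT
  rw [eT2]
  set s := S.card
  set t := T.card
  set A := ∑ x ∈ S, x
  set B := ∑ z ∈ T.image (fun y => n - 1 - y), z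
  have e1 : n - 1 = s + t + 1 := by omega
  have e2 : n - 2 = s + t := by omega
  rw [e2] at htopS htopT
  rw [e1, e2]
  nlinarith [htopS, htopT]

lemma core : ∀ n, ∀ p q : ℕ, ∀ S T : Finset ℕ, Hyp n p q S T → Bound n p q S T := by
  intro n
  induction n using Nat.strong_induction_on with
  | _ n ih =>
  -- helper for the case p = n-1
  have coreP : ∀ p q : ℕ, ∀ S T : Finset ℕ, Hyp n p q S T → p = n - 1 → Bound n p q S T := by
    intro p q S T h hp
    have hmem := hyp_mem h
    have h2n : 2 ≤ n := h.1
    have h0 : (0:ℕ) < n := by omega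
    have hq0 : q ≠ p := h.2.2.2.1.symm
    rcases (hmem 0).mp h0 with h0p | h0q | h0S | h0T
    · omega
    · -- q = 0, p = n-1 : reflect to baseCase
      apply bound_refl h
      have : n - 1 - p = 0 := by omega
      rw [this, ← h0q]
      have : n - 1 - 0 = n - 1 := by omega
      rw [this]
      exact baseCase (by have := hyp_refl h; rwa [hp, ← h0q, Nat.sub_self, Nat.sub_zero] at this)
    · -- 0 ∈ S : reflect, n-1 ∈ S'
      apply bound_refl h
      apply eraseStep (hyp_refl h) ?_ (ih (n-1) (by omega))
      simp only [Finset.mem_image]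
      exact ⟨0, h0S, by omega⟩
    · -- 0 ∈ T : reflect, then swap
      apply bound_refl h
      apply bound_comm
      apply eraseStep (hyp_comm (hyp_refl h)) ?_ (ih (n-1) (by omega))
      simp only [Finset.mem_image]
      exact ⟨0, h0T, by omega⟩
  intro p q S T h
  have hmem := hyp_mem h
  have h2n : 2 ≤ n := h.1
  have hn1 : n - 1 < n := by omega
  rcases (hmem (n-1)).mp hn1 with hp | hq | hS | hT
  · exact coreP p q S T h hp.symm
  · exact bound_comm (coreP q p T S (hyp_comm h) hq.symm)
  · exact eraseStep h hS (ih (n-1) (by omega))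
  · exact bound_comm (eraseStep (hyp_comm h) hT (ih (n-1) (by omega)))



def va (n : ℕ) (hn : 2 ≤ n) : Fin n := ⟨0, by omega⟩
def vb (n : ℕ) (hn : 2 ≤ n) : Fin n := ⟨1, by omega⟩

lemma edgeFinset_bistar {n k1 : ℕ} (hn : 2 ≤ n) (hk : 1 ≤ k1) (hkn : k1 < n) :
    (bistarG n k1).edgeFinset =
      ((Finset.univ.filter (fun v : Fin n => 1 ≤ (v:ℕ) ∧ (v:ℕ) ≤ k1)).image
          (fun v => s(va n hn, v))) ∪
      ((Finset.univ.filter (fun v : Fin n => k1 < (v:ℕ))).image (fun v => s(vb n hn, v))) := by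
  have hva : (va n hn : ℕ) = 0 := rfl
  have hvb : (vb n hn : ℕ) = 1 := rfl
  ext e
  induction e with
  | _ u v =>
    simp only [SimpleGraph.mem_edgeFinset, SimpleGraph.mem_edgeSet, Finset.mem_union,
      Finset.mem_image, Finset.mem_filter, Finset.mem_univ, true_and]
    change (u ≠ v ∧ _) ↔ _
    constructor
    · rintro ⟨hne, hadj⟩
      have hne' : (u:ℕ) ≠ (v:ℕ) := fun hc => hne (Fin.ext hc)
      rcases hadj with ⟨hu0, hv⟩ | ⟨hv0, hu⟩ | ⟨hu1, hv⟩ | ⟨hv1, hu⟩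
      · left
        refine ⟨v, by omega, ?_⟩
        have : va n hn = u := Fin.ext (by omega)
        rw [this]
      · left
        refine ⟨u, by omega, ?_⟩
        have : va n hn = v := Fin.ext (by omega)
        rw [this, Sym2.eq_swap]
      · right
        refine ⟨v, by omega, ?_⟩
        have : vb n hn = u := Fin.ext (by omega)
        rw [this]
      · right
        refine ⟨u, by omega, ?_⟩
        have : vb n hn = v := Fin.ext (by omega)
        rw [this, Sym2.eq_swap]
    · rintro (⟨w, hw, heq⟩ | ⟨w, hw, heq⟩)
      · rw [Sym2.eq_iff] at heq
        rcases heq with ⟨ha, hb⟩ | ⟨ha, hb⟩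
        · have e1 : (u:ℕ) = 0 := by rw [← ha, hva]
          have e2 : (w:ℕ) = (v:ℕ) := by rw [hb]
          exact ⟨fun hc => by rw [hc] at e1; omega, Or.inl ⟨e1, by omega⟩⟩
        · have e1 : (v:ℕ) = 0 := by rw [← ha, hva]
          have e2 : (w:ℕ) = (u:ℕ) := by rw [hb]
          exact ⟨fun hc => by rw [← hc] at e1; omega, Or.inr (Or.inl ⟨e1, by omega⟩)⟩
      · rw [Sym2.eq_iff] at heq
        rcases heq with ⟨ha, hb⟩ | ⟨ha, hb⟩
        · have e1 : (u:ℕ) = 1 := by rw [← ha, hvb]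
          have e2 : (w:ℕ) = (v:ℕ) := by rw [hb]
          exact ⟨fun hc => by rw [← hc] at e2; omega, Or.inr (Or.inr (Or.inl ⟨e1, by omega⟩))⟩
        · have e1 : (v:ℕ) = 1 := by rw [← ha, hvb]
          have e2 : (w:ℕ) = (u:ℕ) := by rw [hb]
          exact ⟨fun hc => by rw [hc] at e2; omega, Or.inr (Or.inr (Or.inr ⟨e1, by omega⟩))⟩

lemma D_bistar_split {n k1 : ℕ} (hn : 2 ≤ n) (hk : 1 ≤ k1) (hkn : k1 < n)
    (π : Equiv.Perm (Fin n)) :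
    D (bistarG n k1) π =
      (∑ v ∈ Finset.univ.filter (fun v : Fin n => 1 ≤ (v:ℕ) ∧ (v:ℕ) ≤ k1),
        ((π (va n hn) : ℤ) - (π v : ℤ)).natAbs) +
      ∑ v ∈ Finset.univ.filter (fun v : Fin n => k1 < (v:ℕ)),
        ((π (vb n hn) : ℤ) - (π v : ℤ)).natAbs := by
  have hva : (va n hn : ℕ) = 0 := rfl
  have hvb : (vb n hn : ℕ) = 1 := rfl
  have hinj1 : ∀ x ∈ Finset.univ.filter (fun v : Fin n => 1 ≤ (v:ℕ) ∧ (v:ℕ) ≤ k1),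
      ∀ y ∈ Finset.univ.filter (fun v : Fin n => 1 ≤ (v:ℕ) ∧ (v:ℕ) ≤ k1),
      s(va n hn, x) = s(va n hn, y) → x = y := by
    intro x hx y hy hxy
    rw [Sym2.eq_iff] at hxy
    rcases hxy with ⟨_, h⟩ | ⟨ha, hb⟩
    · exact h
    · rw [hb, ha]
  have hinj2 : ∀ x ∈ Finset.univ.filter (fun v : Fin n => k1 < (v:ℕ)),
      ∀ y ∈ Finset.univ.filter (fun v : Fin n => k1 < (v:ℕ)),
      s(vb n hn, x) = s(vb n hn, y) → x = y := by
    intro x hx y hy hxy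
    rw [Sym2.eq_iff] at hxy
    rcases hxy with ⟨_, h⟩ | ⟨ha, hb⟩
    · exact h
    · rw [hb, ha]
  unfold D
  rw [edgeFinset_bistar hn hk hkn]
  rw [Finset.sum_union ?dis]
  case dis =>
    rw [Finset.disjoint_left]
    rintro e he1 he2
    simp only [Finset.mem_image, Finset.mem_filter, Finset.mem_univ, true_and] at he1 he2
    obtain ⟨x, hx, rfl⟩ := he1
    obtain ⟨y, hy, hxy⟩ := he2
    rw [Sym2.eq_iff] at hxy
    rcases hxy with ⟨ha, _⟩ | ⟨ha, hb⟩
    · have : (vb n hn : ℕ) = (va n hn : ℕ) := by rw [ha]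
      rw [hva, hvb] at this; omega
    · have : (y:ℕ) = (va n hn : ℕ) := by rw [hb]
      rw [hva] at this; omega
  rw [Finset.sum_image hinj1, Finset.sum_image hinj2]
  congr 1 <;> (apply Finset.sum_congr rfl; intro x hx; simp [edgeLen])

lemma D_le {n k1 : ℕ} (hn : 2 ≤ n) (hk : 1 ≤ k1) (hkn : k1 < n) (π : Equiv.Perm (Fin n)) :
    2 * D (bistarG n k1) π ≤ 2 * (k1 * (n - k1)) + (n-1)*(n-2) := by
  have hva : (va n hn : ℕ) = 0 := rfl
  have hvb : (vb n hn : ℕ) = 1 := rfl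
  have hab : va n hn ≠ vb n hn := by
    intro hc; have := congrArg Fin.val hc; rw [hva, hvb] at this; omega
  set g : Fin n → ℕ := fun v => (π v : ℕ) with hg
  have hginj : Function.Injective g := by
    intro x y hxy
    exact π.injective (Fin.ext hxy)
  set A' := Finset.univ.filter (fun v : Fin n => 1 ≤ (v:ℕ) ∧ (v:ℕ) ≤ k1) with hA'
  set B := Finset.univ.filter (fun v : Fin n => k1 < (v:ℕ)) with hB
  have hbA : vb n hn ∈ A' := by simp [hA', hvb, hk]
  set S := (A'.erase (vb n hn)).image g with hS
  set T := B.image g with hT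
  set p := g (va n hn) with hp
  set q := g (vb n hn) with hq
  -- membership characterizations
  have hmemA : ∀ v : Fin n, v ∈ A'.erase (vb n hn) ↔ (2 ≤ (v:ℕ) ∧ (v:ℕ) ≤ k1) := by
    intro v
    simp only [hA', Finset.mem_erase, Finset.mem_filter, Finset.mem_univ, true_and]
    constructor
    · rintro ⟨hne, h1, h2⟩
      have : (v:ℕ) ≠ 1 := fun hc => hne (Fin.ext (by rw [hc, hvb]))
      omega
    · rintro ⟨h1, h2⟩
      refine ⟨fun hc => ?_, by omega, h2⟩
      rw [hc] at h1; rw [hvb] at h1; omega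
  have hmemB : ∀ v : Fin n, v ∈ B ↔ k1 < (v:ℕ) := by
    intro v; simp [hB]
  -- Hyp
  have hyp : Hyp n p q S T := by
    refine ⟨hn, (π (va n hn)).isLt, (π (vb n hn)).isLt,
      fun hc => hab (hginj hc), ?_, ?_, ?_, ?_, ?_, ?_⟩
    · rw [Finset.disjoint_left]
      rintro z hz1 hz2
      simp only [hS, hT, Finset.mem_image] at hz1 hz2
      obtain ⟨x, hx, rfl⟩ := hz1
      obtain ⟨y, hy, hxy⟩ := hz2
      have := hginj hxy.symm
      subst this
      rw [hmemA] at hx; rw [hmemB] at hy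
      omega
    · simp only [hS, Finset.mem_image]
      rintro ⟨x, hx, hxe⟩
      have := hginj hxe
      subst this
      rw [hmemA] at hx; rw [hva] at hx; omega
    · simp only [hT, Finset.mem_image]
      rintro ⟨x, hx, hxe⟩
      have := hginj hxe
      subst this
      rw [hmemB] at hx; rw [hva] at hx; omega
    · simp only [hS, Finset.mem_image]
      rintro ⟨x, hx, hxe⟩
      have := hginj hxe
      subst this
      exact (Finset.notMem_erase _ _) hx
    · simp only [hT, Finset.mem_image]
      rintro ⟨x, hx, hxe⟩
      have := hginj hxe
      subst this
      rw [hmemB] at hx; rw [hvb] at hx; omega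
    · have huniv : insert (va n hn) (insert (vb n hn) ((A'.erase (vb n hn)) ∪ B)) = Finset.univ := by
        ext v
        simp only [Finset.mem_insert, Finset.mem_union, Finset.mem_univ, iff_true]
        by_cases hv0 : (v:ℕ) = 0
        · left; exact Fin.ext (by rw [hv0, hva])
        · by_cases hv1 : (v:ℕ) = 1
          · right; left; exact Fin.ext (by rw [hv1, hvb])
          · right; right
            by_cases hvk : (v:ℕ) ≤ k1
            · left; rw [hmemA]; omega
            · right; rw [hmemB]; omega
      have himg : Finset.univ.image g = Finset.range n := by
        ext z
        simp only [Finset.mem_image, Finset.mem_univ, true_and, Finset.mem_range]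
        constructor
        · rintro ⟨v, rfl⟩; exact (π v).isLt
        · intro hz; exact ⟨π.symm ⟨z, hz⟩, by simp [hg]⟩
      calc insert p (insert q (S ∪ T))
          = (insert (va n hn) (insert (vb n hn) ((A'.erase (vb n hn)) ∪ B))).image g := by
            rw [Finset.image_insert, Finset.image_insert, Finset.image_union]
        _ = Finset.range n := by rw [huniv, himg]
  have hbound := core n p q S T hyp
  -- cards
  have hcardA' : A'.card = k1 := by
    have himg : A'.image Fin.val = Finset.Icc 1 k1 := by
      ext z
      simp only [hA', Finset.mem_image, Finset.mem_filter, Finset.mem_univ, true_and,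
        Finset.mem_Icc]
      constructor
      · rintro ⟨v, hv, rfl⟩; exact hv
      · intro hz; exact ⟨⟨z, by omega⟩, hz, rfl⟩
    have := congrArg Finset.card himg
    rw [Finset.card_image_of_injective _ Fin.val_injective, Nat.card_Icc] at this
    omega
  have hcardB : B.card = n - 1 - k1 := by
    have himg : B.image Fin.val = Finset.Icc (k1+1) (n-1) := by
      ext z
      simp only [hB, Finset.mem_image, Finset.mem_filter, Finset.mem_univ, true_and,
        Finset.mem_Icc]
      constructor
      · rintro ⟨v, hv, rfl⟩; exact ⟨by omega, by have := v.isLt; omega⟩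
      · intro hz; exact ⟨⟨z, by omega⟩, (show k1 < z by omega), rfl⟩
    have := congrArg Finset.card himg
    rw [Finset.card_image_of_injective _ Fin.val_injective, Nat.card_Icc] at this
    omega
  have hcardS : S.card = k1 - 1 := by
    rw [hS, Finset.card_image_of_injective _ hginj, Finset.card_erase_of_mem hbA, hcardA']
  have hcardT : T.card = n - 1 - k1 := by
    rw [hT, Finset.card_image_of_injective _ hginj, hcardB]
  -- D = coreLHS
  have hDL : D (bistarG n k1) π = coreLHS p q S T := by
    rw [D_bistar_split hn hk hkn π]
    unfold coreLHS
    have hsplitA : (∑ v ∈ A', ((π (va n hn) : ℤ) - (π v : ℤ)).natAbs)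
        = (∑ v ∈ A'.erase (vb n hn), ((π (va n hn) : ℤ) - (π v : ℤ)).natAbs)
          + ((π (va n hn) : ℤ) - (π (vb n hn) : ℤ)).natAbs := by
      rw [← Finset.sum_erase_add A' _ hbA]
    have hSsum : (∑ x ∈ S, ((p:ℤ) - x).natAbs)
        = ∑ v ∈ A'.erase (vb n hn), ((π (va n hn) : ℤ) - (π v : ℤ)).natAbs := by
      rw [hS, Finset.sum_image (fun x _ y _ h => hginj h)]
    have hTsum : (∑ y ∈ T, ((q:ℤ) - y).natAbs)
        = ∑ v ∈ B, ((π (vb n hn) : ℤ) - (π v : ℤ)).natAbs := by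
      rw [hT, Finset.sum_image (fun x _ y _ h => hginj h)]
    rw [hsplitA, hSsum, hTsum]
    ring
  unfold Bound at hbound
  have e1 : k1 - 1 + 1 = k1 := by omega
  have e2 : n - 1 - k1 + 1 = n - k1 := by omega
  rw [hcardS, hcardT, e1, e2] at hbound
  rw [hDL]
  calc 2 * coreLHS p q S T ≤ 2 * k1 * (n - k1) + (n-1)*(n-2) := hbound
    _ = 2 * (k1 * (n - k1)) + (n-1)*(n-2) := by ring


lemma gauss2 : ∀ c : ℕ, 2 * (∑ i ∈ Finset.range c, i) + c = c * c := by
  intro c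
  induction c with
  | zero => simp
  | succ c ih => rw [Finset.sum_range_succ]; nlinarith [ih]

section Opt
variable (n k1 : ℕ) (hn : 2 ≤ n) (hk : 1 ≤ k1) (hkn : k1 < n)

def optf : Fin n → Fin n :=
  fun v => if h0 : (v:ℕ) = 0 then ⟨0, by omega⟩
    else if h1 : (v:ℕ) = 1 then ⟨n-1, by omega⟩
    else if hle : (v:ℕ) ≤ k1 then ⟨(v:ℕ) + (n - k1) - 2, by omega⟩
    else ⟨(v:ℕ) - k1, by have := v.isLt; omega⟩

lemma optf_inj : Function.Injective (optf n k1 hn hk hkn) := by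
  intro u v h
  have hu := u.isLt
  have hv := v.isLt
  unfold optf at h
  split_ifs at h <;>
    (apply Fin.ext; simp only [Fin.mk.injEq] at h; omega)

noncomputable def optPerm : Equiv.Perm (Fin n) :=
  Equiv.ofBijective _ ((Finite.injective_iff_bijective).mp (optf_inj n k1 hn hk hkn))

lemma optPerm_apply (v : Fin n) : optPerm n k1 hn hk hkn v = optf n k1 hn hk hkn v := rfl

end Opt

set_option maxHeartbeats 1600000 in
lemma D_opt {n k1 : ℕ} (hn : 2 ≤ n) (hk : 1 ≤ k1) (hkn : k1 < n) :
    2 * D (bistarG n k1) (optPerm n k1 hn hk hkn) = 2 * (k1 * (n - k1)) + (n-1)*(n-2) := by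
  set π := optPerm n k1 hn hk hkn with hπdef
  have hva : (va n hn : ℕ) = 0 := rfl
  have hvb : (vb n hn : ℕ) = 1 := rfl
  have hπa : ((π (va n hn)) : ℕ) = 0 := by
    show ((optf n k1 hn hk hkn (va n hn)) : ℕ) = 0
    unfold optf
    rw [dif_pos hva]
  have hπb : ((π (vb n hn)) : ℕ) = n - 1 := by
    show ((optf n k1 hn hk hkn (vb n hn)) : ℕ) = n - 1
    unfold optf
    rw [dif_neg (by rw [hvb]; omega), dif_pos hvb]
  have hπmid : ∀ v : Fin n, 2 ≤ (v:ℕ) → (v:ℕ) ≤ k1 → ((π v) : ℕ) = (v:ℕ) + (n - k1) - 2 := by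
    intro v hv2 hvk
    show ((optf n k1 hn hk hkn v) : ℕ) = _
    unfold optf
    rw [dif_neg (by omega), dif_neg (by omega), dif_pos hvk]
  have hπhigh : ∀ v : Fin n, k1 < (v:ℕ) → ((π v) : ℕ) = (v:ℕ) - k1 := by
    intro v hvk
    show ((optf n k1 hn hk hkn v) : ℕ) = _
    unfold optf
    rw [dif_neg (by omega), dif_neg (by omega), dif_neg (by omega)]
  rw [D_bistar_split hn hk hkn π]
  set A' := Finset.univ.filter (fun v : Fin n => 1 ≤ (v:ℕ) ∧ (v:ℕ) ≤ k1) with hA'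
  set B := Finset.univ.filter (fun v : Fin n => k1 < (v:ℕ)) with hB
  have hbA : vb n hn ∈ A' := by simp [hA', hvb, hk]
  rw [← Finset.sum_erase_add A' _ hbA]
  -- hub edge term
  have hhub : ((π (va n hn) : ℤ) - (π (vb n hn) : ℤ)).natAbs = n - 1 := by omega
  -- A side
  have hstepA : ∀ v ∈ A'.erase (vb n hn),
      ((π (va n hn) : ℤ) - (π v : ℤ)).natAbs = (v:ℕ) + (n - k1) - 2 := by
    intro v hv
    simp only [hA', Finset.mem_erase, Finset.mem_filter, Finset.mem_univ, true_and] at hv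
    obtain ⟨hne, hv1, hvk⟩ := hv
    have hv2 : 2 ≤ (v:ℕ) := by
      rcases Nat.lt_or_ge (v:ℕ) 2 with h | h
      · exfalso; apply hne; apply Fin.ext; omega
      · exact h
    have := hπmid v hv2 hvk
    omega
  rw [Finset.sum_congr rfl hstepA]
  have himgA : (A'.erase (vb n hn)).image Fin.val = Finset.Icc 2 k1 := by
    ext z
    simp only [hA', Finset.mem_image, Finset.mem_erase, Finset.mem_filter, Finset.mem_univ,
      true_and, Finset.mem_Icc]
    constructor
    · rintro ⟨v, ⟨hne, hv1, hvk⟩, rfl⟩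
      have : (v:ℕ) ≠ 1 := fun hc => hne (Fin.ext (by rw [hc, hvb]))
      omega
    · intro hz
      refine ⟨⟨z, by omega⟩, ⟨fun hc => ?_, (show 1 ≤ z by omega), (show z ≤ k1 by omega)⟩, rfl⟩
      have := congrArg Fin.val hc
      rw [hvb] at this
      simp at this
      omega
  have hAsum : (∑ v ∈ A'.erase (vb n hn), ((v:ℕ) + (n - k1) - 2))
      = ∑ z ∈ Finset.Icc 2 k1, (z + (n - k1) - 2) := by
    rw [← himgA, Finset.sum_image (fun x _ y _ h => Fin.val_injective h)]
  rw [hAsum]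
  -- B side
  have hstepB : ∀ v ∈ B, ((π (vb n hn) : ℤ) - (π v : ℤ)).natAbs = (n - 1 + k1) - (v:ℕ) := by
    intro v hv
    simp only [hB, Finset.mem_filter, Finset.mem_univ, true_and] at hv
    have h1 := hπhigh v hv
    have h2 := v.isLt
    omega
  rw [Finset.sum_congr rfl hstepB]
  have himgB : B.image Fin.val = Finset.Icc (k1+1) (n-1) := by
    ext z
    simp only [hB, Finset.mem_image, Finset.mem_filter, Finset.mem_univ, true_and,
      Finset.mem_Icc]
    constructor
    · rintro ⟨v, hv, rfl⟩; exact ⟨by omega, by have := v.isLt; omega⟩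
    · intro hz; exact ⟨⟨z, by omega⟩, (show k1 < z by omega), rfl⟩
  have hBsum : (∑ v ∈ B, ((n - 1 + k1) - (v:ℕ)))
      = ∑ z ∈ Finset.Icc (k1+1) (n-1), ((n - 1 + k1) - z) := by
    rw [← himgB, Finset.sum_image (fun x _ y _ h => Fin.val_injective h)]
  rw [hBsum, hhub]
  -- now pure arithmetic over Icc sums
  rw [← Finset.Ico_add_one_right_eq_Icc 2 k1, ← Finset.Ico_add_one_right_eq_Icc (k1+1) (n-1),
    Finset.sum_Ico_eq_sum_range, Finset.sum_Ico_eq_sum_range]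
  have eA : ∀ i ∈ Finset.range (k1 + 1 - 2), (2 + i + (n - k1) - 2) = (n - k1) + i := by
    intro i _; omega
  have eB : ∀ i ∈ Finset.range (n - 1 + 1 - (k1+1)),
      ((n - 1 + k1) - (k1 + 1 + i)) = k1 + ((n-1-k1) - 1 - i) := by
    intro i hi
    simp only [Finset.mem_range] at hi
    omega
  rw [Finset.sum_congr rfl eA, Finset.sum_congr rfl eB]
  have hr1 : k1 + 1 - 2 = k1 - 1 := by omega
  have hr2 : n - 1 + 1 - (k1 + 1) = n - 1 - k1 := by omega
  rw [hr1, hr2]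
  have hrefl := Finset.sum_range_reflect (fun j => k1 + j) (n - 1 - k1)
  rw [hrefl]
  rw [Finset.sum_add_distrib, Finset.sum_add_distrib, Finset.sum_const, Finset.sum_const,
    Finset.card_range, Finset.card_range, smul_eq_mul, smul_eq_mul]
  -- linear arithmetic with products: substitute variables
  obtain ⟨c, rfl⟩ : ∃ c, k1 = c + 1 := ⟨k1 - 1, by omega⟩
  obtain ⟨m, rfl⟩ : ∃ m, n = c + m + 2 := ⟨n - c - 2, by omega⟩
  have e1 : c + 1 - 1 = c := by omega
  have e2 : c + m + 2 - 1 - (c + 1) = m := by omega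
  have e3 : c + m + 2 - (c + 1) = m + 1 := by omega
  have e4 : c + m + 2 - 1 = c + m + 1 := by omega
  have e5 : c + m + 2 - 2 = c + m := by omega
  rw [e1, e2, e3, e4, e5] at *
  nlinarith [gauss2 c, gauss2 m]

/-- For a bistar tree on `n` vertices with hub degrees `k₁ ≥ n - k₁ ≥ 1`,
the maximum over all linear arrangements of the sum of edge lengths equals
`k₁(n - k₁) + n(n-3)/2 + 1`. -/
theorem bistar_Dmax (n k1 : ℕ) (h1 : k1 < n) (h2 : n ≤ 2 * k1) :
    (Dmax (bistarG n k1) : ℤ) =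
      (k1 : ℤ) * ((n : ℤ) - k1) + (n : ℤ) * ((n : ℤ) - 3) / 2 + 1 := by
  have hk : 1 ≤ k1 := by omega
  have hn : 2 ≤ n := by omega
  obtain ⟨c, hct⟩ := Nat.even_mul_succ_self (n-2)
  have h22 : n - 2 + 1 = n - 1 := by omega
  rw [h22] at hct
  have hc : (n-1)*(n-2) = 2*c := by rw [mul_comm]; omega
  set K := k1 * (n - k1) with hK
  have hup : ∀ π : Equiv.Perm (Fin n), D (bistarG n k1) π ≤ K + c := by
    intro π
    have hd := D_le hn hk h1 π
    rw [hc, ← hK] at hd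
    omega
  have hDle : Dmax (bistarG n k1) ≤ K + c := Finset.sup_le (fun π _ => hup π)
  have hlow : K + c ≤ Dmax (bistarG n k1) := by
    have hval := D_opt hn hk h1
    rw [hc, ← hK] at hval
    have heq : D (bistarG n k1) (optPerm n k1 hn hk h1) = K + c := by omega
    rw [← heq]
    exact Finset.le_sup (Finset.mem_univ _)
  have hDmax : Dmax (bistarG n k1) = K + c := le_antisymm hDle hlow
  rw [hDmax]
  have hKZ : ((K:ℕ) : ℤ) = (k1:ℤ)*((n:ℤ)-(k1:ℤ)) := by
    rw [hK]
    push_cast [Nat.cast_sub h1.le]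
    ring
  have hcZ : 2*(c:ℤ) = ((n:ℤ)-1)*((n:ℤ)-2) := by
    have hn1 : (1:ℕ) ≤ n := by omega
    have := congrArg (Nat.cast : ℕ → ℤ) hc
    push_cast [Nat.cast_sub hn1, Nat.cast_sub hn] at this
    linarith
  have hx : (n:ℤ)*((n:ℤ)-3) = 2*(c:ℤ) - 2 := by linear_combination (-1 : ℤ) * hcZ
  push_cast
  rw [hKZ, hx]
  have : (2*(c:ℤ) - 2)/2 = (c:ℤ) - 1 := by omega
  rw [this]
  ring
end

section
/- For any tree t on n vertices, the maximum over all linear arrangements of the sum of edge lengths satisfies D_max(t) ≤ (3(n-1)² + 1 - (n mod 2))/4, with equality achieved by the balanced bistar tree. -/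
open Finset

section UpperBound

private lemma Sstep (m : ℕ)
    (ihm : ∑ p ∈ range m, (2*(p:ℤ) + 1 - m).natAbs = (m^2 - m % 2) / 2) :
    ∑ p ∈ range (m+2), (2*(p:ℤ) + 1 - ((m+2:ℕ)):ℤ).natAbs = ((m+2)^2 - (m+2) % 2) / 2 := by
  rw [Finset.sum_range_succ, Finset.sum_range_succ']
  have h1 : ∑ i ∈ range m, (2*((i+1:ℕ):ℤ) + 1 - ((m+2:ℕ):ℤ)).natAbs
      = ∑ i ∈ range m, (2*(i:ℤ) + 1 - ((m:ℕ):ℤ)).natAbs := by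
    apply Finset.sum_congr rfl
    intro i _
    congr 1
    push_cast
    ring
  rw [h1, ihm]
  have h2 : ((2:ℤ) * ((0:ℕ):ℤ) + 1 - ((m+2:ℕ):ℤ)).natAbs = m + 1 := by
    push_cast; omega
  have h3 : ((2:ℤ) * ((m+1:ℕ):ℤ) + 1 - ((m+2:ℕ):ℤ)).natAbs = m + 1 := by
    push_cast; omega
  rw [h2, h3]
  obtain ⟨A, hA⟩ : ∃ A, m^2 = A := ⟨_, rfl⟩
  obtain ⟨B, hB⟩ : ∃ B, (m+2)^2 = B := ⟨_, rfl⟩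
  have hb : B = A + 4*m + 4 := by rw [← hA, ← hB]; ring
  have hp : m ^ 2 % 2 = m % 2 := by
    rcases Nat.even_or_odd m with ⟨k, hk⟩ | ⟨k, hk⟩ <;> subst hk
    · rw [show (k+k)^2 = 4*(k*k) from by ring]; omega
    · rw [show (2*k+1)^2 = 4*(k*k) + 4*k + 1 from by ring]; omega
  rw [hA] at hp
  rw [hA, hB]
  clear h1 h2 h3 ihm hA hB
  omega

private lemma Ssum (n : ℕ) :
    ∑ p ∈ range n, (2*(p:ℤ) + 1 - n).natAbs = (n^2 - n % 2) / 2 := by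
  induction n using Nat.strong_induction_on with
  | _ n ih =>
    match n, ih with
    | 0, _ => simp
    | 1, _ => simp
    | (m+2), ih => exact Sstep m (ih m (by omega))

private lemma sum_edge_endpoints {n : ℕ} (G : SimpleGraph (Fin n)) [DecidableRel G.Adj]
    (f : Fin n → ℕ) :
    ∑ e ∈ G.edgeFinset, Sym2.lift ⟨fun u v => f u + f v, fun u v => by dsimp only; ring⟩ e
      = ∑ v, G.degree v * f v := by
  classical
  have hmap : ∀ p : Fin n × Fin n, p ∈ (univ.filter fun p : Fin n × Fin n => G.Adj p.1 p.2) →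
      Sym2.mk p.1 p.2 ∈ G.edgeFinset := by
    intro p hp
    simp only [mem_filter] at hp
    simpa [SimpleGraph.mem_edgeFinset] using hp.2
  have key := Finset.sum_fiberwise_of_maps_to hmap (fun p => f p.1)
  have h1 : ∀ e ∈ G.edgeFinset,
      Sym2.lift ⟨fun u v => f u + f v, fun u v => by dsimp only; ring⟩ e
      = ∑ p ∈ (univ.filter fun p : Fin n × Fin n => G.Adj p.1 p.2).filter
          (fun p => Sym2.mk p.1 p.2 = e), f p.1 := by
    intro e he
    induction e with
    | _ u v =>
      rw [SimpleGraph.mem_edgeFinset] at he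
      have hadj : G.Adj u v := he
      have hne : u ≠ v := hadj.ne
      have hset : (univ.filter fun p : Fin n × Fin n => G.Adj p.1 p.2).filter
          (fun p => Sym2.mk p.1 p.2 = s(u, v)) = {(u, v), (v, u)} := by
        ext p
        simp only [mem_filter, mem_univ, true_and, mem_insert, mem_singleton, Sym2.eq,
          Sym2.rel_iff', Prod.ext_iff]
        constructor
        · rintro ⟨_, h | h⟩
          · left; exact ⟨h.1, h.2⟩
          · right; exact ⟨h.1, h.2⟩
        · rintro (⟨h1, h2⟩ | ⟨h1, h2⟩)
          · rw [show p = (p.1, p.2) from rfl, h1, h2]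
            exact ⟨hadj, Or.inl ⟨rfl, rfl⟩⟩
          · rw [show p = (p.1, p.2) from rfl, h1, h2]
            exact ⟨hadj.symm, Or.inr ⟨rfl, rfl⟩⟩
      rw [hset]
      rw [Finset.sum_insert (by simp [Prod.ext_iff, hne]), Finset.sum_singleton]
      simp [Sym2.lift_mk]
  calc ∑ e ∈ G.edgeFinset, Sym2.lift ⟨fun u v => f u + f v, fun u v => by dsimp only; ring⟩ e
      = ∑ e ∈ G.edgeFinset, ∑ p ∈ (univ.filter fun p : Fin n × Fin n =>
          G.Adj p.1 p.2).filter (fun p => Sym2.mk p.1 p.2 = e), f p.1 := Finset.sum_congr rfl h1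
    _ = ∑ p ∈ (univ.filter fun p : Fin n × Fin n => G.Adj p.1 p.2), f p.1 := key
    _ = ∑ v, G.degree v * f v := by
        rw [Finset.sum_filter, Fintype.sum_prod_type]
        apply Finset.sum_congr rfl
        intro v _
        rw [← Finset.sum_filter]
        dsimp only
        rw [Finset.sum_const]
        have : univ.filter (fun a => G.Adj v a) = G.neighborFinset v := by
          ext u; simp [SimpleGraph.mem_neighborFinset]
        rw [this, smul_eq_mul, SimpleGraph.card_neighborFinset_eq_degree]

private lemma finArith (n Dv : ℕ) (hn : 2 ≤ n)
    (h : 2*Dv ≤ (n^2 - n % 2)/2 + (n-2)*(n-1)) :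
    Dv ≤ (3*(n-1)^2 + 1 - n % 2)/4 := by
  obtain ⟨c, rfl | rfl⟩ : ∃ c, n = 2*c+2 ∨ n = 2*c+3 := by
    rcases Nat.even_or_odd n with ⟨a, ha⟩ | ⟨a, ha⟩
    · exact ⟨a - 1, Or.inl (by omega)⟩
    · exact ⟨a - 1, Or.inr (by omega)⟩
  · have e2 : 2*c+2 - 2 = 2*c := by omega
    have e3 : 2*c+2 - 1 = 2*c+1 := by omega
    simp only [e2, e3] at h ⊢
    rw [show (2*c+2)^2 = 4*(c*c)+8*c+4 from by ring] at h
    rw [show (2*c)*(2*c+1) = 4*(c*c)+2*c from by ring] at h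
    rw [show 3*(2*c+1)^2 = 12*(c*c)+12*c+3 from by ring]
    omega
  · have e2 : 2*c+3 - 2 = 2*c+1 := by omega
    have e3 : 2*c+3 - 1 = 2*c+2 := by omega
    simp only [e2, e3] at h ⊢
    rw [show (2*c+3)^2 = 4*(c*c)+12*c+9 from by ring] at h
    rw [show (2*c+1)*(2*c+2) = 4*(c*c)+6*c+2 from by ring] at h
    rw [show 3*(2*c+2)^2 = 12*(c*c)+24*c+12 from by ring]
    omega

/-- Generic upper bound: any graph on `n ≥ 2` vertices with `n-1` edges and
minimum degree at least 1 has `D ≤ (3(n-1)² + 1 - n % 2)/4` for every arrangement. -/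
private lemma genUB {n : ℕ} (hn : 2 ≤ n) (G : SimpleGraph (Fin n)) [DecidableRel G.Adj]
    (hcard : G.edgeFinset.card + 1 = n) (hdeg : ∀ v, 0 < G.degree v)
    (π : Equiv.Perm (Fin n)) :
    D G π ≤ (3 * (n-1)^2 + 1 - n % 2) / 4 := by
  classical
  set f : Fin n → ℕ := fun v => (2*((π v : ℕ):ℤ) + 1 - n).natAbs with hf
  have step1 : 2 * D G π ≤ ∑ e ∈ G.edgeFinset,
      Sym2.lift ⟨fun u v => f u + f v, fun u v => by dsimp only; ring⟩ e := by
    rw [D, Finset.mul_sum]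
    apply Finset.sum_le_sum
    intro e _
    induction e with
    | _ u v =>
      show 2 * edgeLen π s(u, v) ≤ _
      rw [show edgeLen π s(u, v) = ((π u : ℤ) - (π v : ℤ)).natAbs from rfl,
        Sym2.lift_mk]
      simp only [hf]
      omega
  have step2 := sum_edge_endpoints G f
  have step3 : ∑ v, G.degree v * f v = ∑ v, f v + ∑ v, (G.degree v - 1) * f v := by
    rw [← Finset.sum_add_distrib]
    apply Finset.sum_congr rfl
    intro v _
    obtain ⟨k, hk⟩ : ∃ k, G.degree v = k + 1 := ⟨G.degree v - 1, by have := hdeg v; omega⟩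
    rw [hk, Nat.add_sub_cancel]
    ring
  have step4 : ∑ v, f v = (n^2 - n % 2) / 2 := by
    have h1 : ∑ v, f v = ∑ x : Fin n, (2*((x:ℕ):ℤ) + 1 - n).natAbs :=
      Equiv.sum_comp π (fun x => (2*((x:ℕ):ℤ) + 1 - n).natAbs)
    rw [h1, Fin.sum_univ_eq_sum_range (fun p => (2*((p:ℕ):ℤ) + 1 - n).natAbs), Ssum]
  have fbound : ∀ v, f v ≤ n - 1 := by
    intro v
    have := (π v).is_lt
    simp only [hf]
    omega
  have step5 : ∑ v, (G.degree v - 1) * f v ≤ (n-2) * (n-1) := by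
    calc ∑ v, (G.degree v - 1) * f v ≤ ∑ v, (G.degree v - 1) * (n-1) :=
          Finset.sum_le_sum fun v _ => Nat.mul_le_mul_left _ (fbound v)
      _ = (∑ v, (G.degree v - 1)) * (n-1) := by rw [Finset.sum_mul]
      _ ≤ (n-2) * (n-1) := by
          apply Nat.mul_le_mul_right
          have hsum : ∑ v, G.degree v = 2 * G.edgeFinset.card :=
            G.sum_degrees_eq_twice_card_edges
          have h2 : ∑ v, (G.degree v - 1) + ∑ v : Fin n, 1 = ∑ v, G.degree v := by
            rw [← Finset.sum_add_distrib]
            apply Finset.sum_congr rfl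
            intro v _
            have := hdeg v
            omega
          have h3 : (∑ v : Fin n, 1) = n := by simp
          omega
  apply finArith n _ hn
  calc 2 * D G π ≤ ∑ v, G.degree v * f v := by rw [← step2]; exact step1
    _ = ∑ v, f v + ∑ v, (G.degree v - 1) * f v := step3
    _ ≤ (n^2 - n % 2) / 2 + (n-2)*(n-1) := by
        rw [step4]
        exact Nat.add_le_add_left step5 _

end UpperBound

open Fin.NatCast

section Bistar
variable {n : ℕ}

/-- the `i`-th edge of the bistar, for `i < n-1`. -/
private def bedge (n : ℕ) [NeZero n] (i : ℕ) : Sym2 (Fin n) :=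
  if i < (n+1)/2 then s(((0:ℕ) : Fin n), ((i+1 : ℕ) : Fin n))
  else s(((1:ℕ) : Fin n), ((i+1 : ℕ) : Fin n))

private def bidx : Sym2 (Fin n) → ℕ :=
  Sym2.lift ⟨fun u v => max u.val v.val - 1, fun u v => by dsimp only; rw [max_comm]⟩

private lemma bistar_sum [NeZero n] (hn : 2 ≤ n) (F : Sym2 (Fin n) → ℕ) :
    ∑ e ∈ (bistarG n ((n+1)/2)).edgeFinset, F e = ∑ i ∈ range (n-1), F (bedge n i) := by
  set k1 := (n+1)/2 with hk1
  have hk1a : 1 ≤ k1 := by omega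
  have hk1b : k1 ≤ n - 1 := by omega
  have hv : ∀ m : ℕ, m < n → (((m : ℕ) : Fin n) : ℕ) = m := fun m hm => Fin.val_cast_of_lt hm
  symm
  apply Finset.sum_nbij' (i := bedge n) (j := bidx)
  · intro i hi
    rw [Finset.mem_range] at hi
    rw [SimpleGraph.mem_edgeFinset]
    by_cases hc : i < k1
    · rw [bedge, if_pos (by omega)]
      refine ⟨?_, ?_⟩
      · apply Fin.ne_of_val_ne
        rw [hv 0 (by omega), hv (i+1) (by omega)]
        omega
      · left
        rw [hv 0 (by omega), hv (i+1) (by omega)]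
        omega
    · rw [bedge, if_neg (by omega)]
      refine ⟨?_, ?_⟩
      · apply Fin.ne_of_val_ne
        rw [hv 1 (by omega), hv (i+1) (by omega)]
        omega
      · right; right; left
        rw [hv 1 (by omega), hv (i+1) (by omega)]
        exact ⟨rfl, by omega⟩
  · intro e he
    rw [SimpleGraph.mem_edgeFinset] at he
    induction e with
    | _ u v =>
      rw [SimpleGraph.mem_edgeSet] at he
      obtain ⟨hne, hcase⟩ : u ≠ v ∧ _ := he
      rw [Finset.mem_range]
      show max u.val v.val - 1 < n - 1
      have h1 := u.is_lt
      have h2 := v.is_lt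
      omega
  · intro i hi
    rw [Finset.mem_range] at hi
    by_cases hc : i < k1
    · rw [bedge, if_pos (by omega)]
      show max (((0:ℕ) : Fin n)).val (((i+1:ℕ) : Fin n)).val - 1 = i
      rw [hv 0 (by omega), hv (i+1) (by omega)]
      omega
    · rw [bedge, if_neg (by omega)]
      show max (((1:ℕ) : Fin n)).val (((i+1:ℕ) : Fin n)).val - 1 = i
      rw [hv 1 (by omega), hv (i+1) (by omega)]
      omega
  · intro e he
    rw [SimpleGraph.mem_edgeFinset] at he
    induction e with
    | _ u v =>
      rw [SimpleGraph.mem_edgeSet] at he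
      obtain ⟨hne, hcase⟩ : u ≠ v ∧ _ := he
      have hne' : u.val ≠ v.val := fun h => hne (Fin.ext h)
      have h1 := u.is_lt
      have h2 := v.is_lt
      show bedge n (max u.val v.val - 1) = s(u, v)
      rcases hcase with ⟨hu0, hv'⟩ | ⟨hv0, hu'⟩ | ⟨hu1, hvk⟩ | ⟨hv1, huk⟩
      · have hmax : max u.val v.val = v.val := by omega
        rw [bedge, hmax, if_pos (by omega)]
        have hvv : ((v.val - 1 + 1 : ℕ) : Fin n) = v := by
          rw [show v.val - 1 + 1 = v.val from by omega, Fin.cast_val_eq_self]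
        rw [hvv, show ((0:ℕ) : Fin n) = u from Fin.ext (by rw [hv 0 (by omega)]; omega)]
      · have hmax : max u.val v.val = u.val := by omega
        rw [bedge, hmax, if_pos (by omega)]
        have huu : ((u.val - 1 + 1 : ℕ) : Fin n) = u := by
          rw [show u.val - 1 + 1 = u.val from by omega, Fin.cast_val_eq_self]
        rw [huu, show ((0:ℕ) : Fin n) = v from Fin.ext (by rw [hv 0 (by omega)]; omega)]
        rw [Sym2.eq_swap]
      · have hmax : max u.val v.val = v.val := by omega
        rw [bedge, hmax, if_neg (by omega)]
        have hvv : ((v.val - 1 + 1 : ℕ) : Fin n) = v := by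
          rw [show v.val - 1 + 1 = v.val from by omega, Fin.cast_val_eq_self]
        rw [hvv, show ((1:ℕ) : Fin n) = u from Fin.ext (by rw [hv 1 (by omega)]; omega)]
      · have hmax : max u.val v.val = u.val := by omega
        rw [bedge, hmax, if_neg (by omega)]
        have huu : ((u.val - 1 + 1 : ℕ) : Fin n) = u := by
          rw [show u.val - 1 + 1 = u.val from by omega, Fin.cast_val_eq_self]
        rw [huu, show ((1:ℕ) : Fin n) = v from Fin.ext (by rw [hv 1 (by omega)]; omega)]
        rw [Sym2.eq_swap]
  · intro i _
    rfl

private lemma bistar_card [NeZero n] (hn : 2 ≤ n) :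
    (bistarG n ((n+1)/2)).edgeFinset.card + 1 = n := by
  have h := bistar_sum (n := n) hn (fun _ => 1)
  rw [Finset.sum_const, Finset.sum_const, Finset.card_range, smul_eq_mul, smul_eq_mul,
    mul_one, mul_one] at h
  omega

private lemma bistar_deg_pos (hn : 2 ≤ n) (v : Fin n) :
    0 < (bistarG n ((n+1)/2)).degree v := by
  haveI : NeZero n := ⟨by omega⟩
  rw [SimpleGraph.degree_pos_iff_exists_adj]
  have hvlt := v.is_lt
  have hk1b : (n+1)/2 ≤ n - 1 := by omega
  by_cases h0 : (v : ℕ) = 0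
  · refine ⟨((1:ℕ) : Fin n), ?_, ?_⟩
    · apply Fin.ne_of_val_ne
      rw [Fin.val_cast_of_lt (show 1 < n by omega)]
      omega
    · left
      rw [Fin.val_cast_of_lt (show 1 < n by omega)]
      exact ⟨h0, Or.inl rfl⟩
  · by_cases h1 : (v : ℕ) ≤ (n+1)/2
    · refine ⟨((0:ℕ) : Fin n), ?_, ?_⟩
      · apply Fin.ne_of_val_ne
        rw [Fin.val_cast_of_lt (show 0 < n by omega)]
        omega
      · right; left
        rw [Fin.val_cast_of_lt (show 0 < n by omega)]
        exact ⟨rfl, by omega⟩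
    · refine ⟨((1:ℕ) : Fin n), ?_, ?_⟩
      · apply Fin.ne_of_val_ne
        rw [Fin.val_cast_of_lt (show 1 < n by omega)]
        omega
      · right; right; right
        rw [Fin.val_cast_of_lt (show 1 < n by omega)]
        exact ⟨rfl, by omega⟩

private lemma pi0_val [NeZero n] (hn : 2 ≤ n) (v : Fin n) :
    ((Equiv.subRight (1 : Fin n)) v : Fin n).val = (v.val + (n-1)) % n := by
  rw [Equiv.subRight_apply]
  rw [Fin.sub_def]
  have h1 : (1 : Fin n).val = 1 := by
    rw [Fin.val_one']
    exact Nat.one_mod_eq_one.mpr (by omega)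
  simp only [h1]
  rw [Nat.add_comm]

private lemma bistar_lower_calc (n : ℕ) (hn : 2 ≤ n) :
    ∑ i ∈ range (n-1), (if i < (n+1)/2 then n-1-i else i) = (3*(n-1)^2 + 1 - n % 2)/4 := by
  obtain ⟨k1, hk1⟩ : ∃ k, (n+1)/2 = k := ⟨_, rfl⟩
  rw [hk1]
  have hk1a : 1 ≤ k1 := by omega
  have hk1b : k1 ≤ n - 1 := by omega
  have hsplit : ∑ i ∈ range (n-1), (if i < k1 then n-1-i else i)
      = (∑ i ∈ range k1, (n-1-i)) + ∑ i ∈ Ico k1 (n-1), i := by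
    rw [Finset.range_eq_Ico, ← Finset.sum_Ico_consecutive _ (Nat.zero_le k1) hk1b]
    congr 1
    · rw [← Finset.range_eq_Ico]
      apply Finset.sum_congr rfl
      intro i hi
      rw [if_pos (mem_range.mp hi)]
    · apply Finset.sum_congr rfl
      intro i hi
      rw [if_neg (by rw [Finset.mem_Ico] at hi; omega)]
  rw [hsplit]
  have e1 : (∑ i ∈ range k1, (n-1-i)) + ∑ i ∈ range k1, i = k1 * (n-1) := by
    rw [← Finset.sum_add_distrib]
    rw [Finset.sum_congr rfl (fun i hi => show n-1-i+i = n-1 by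
      rw [Finset.mem_range] at hi; omega)]
    rw [Finset.sum_const, Finset.card_range, smul_eq_mul]
  have e2 := Finset.sum_range_id_mul_two k1
  have e3 := Finset.sum_range_id_mul_two (n-1)
  have e4 : (∑ i ∈ range k1, i) + ∑ i ∈ Ico k1 (n-1), i = ∑ i ∈ range (n-1), i := by
    rw [Finset.range_eq_Ico, Finset.range_eq_Ico]
    exact Finset.sum_Ico_consecutive (fun i => i) (Nat.zero_le k1) hk1b
  obtain ⟨c, rfl | rfl⟩ : ∃ c, n = 2*c+2 ∨ n = 2*c+3 := by
    rcases Nat.even_or_odd n with ⟨a, ha⟩ | ⟨a, ha⟩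
    · exact ⟨a - 1, Or.inl (by omega)⟩
    · exact ⟨a - 1, Or.inr (by omega)⟩
  · have hk : k1 = c + 1 := by omega
    have hn1 : 2*c+2 - 1 = 2*c+1 := by omega
    subst hk
    rw [hn1] at e1 e3 e4 ⊢
    rw [show 2*c+1-1 = 2*c from by omega] at e3
    rw [show (c+1) * (2*c+1) = 2*(c*c) + 3*c + 1 from by ring] at e1
    rw [show c+1-1 = c from by omega, show (c+1) * c = c*c + c from by ring] at e2
    rw [show (2*c+1) * (2*c) = 4*(c*c) + 2*c from by ring] at e3
    rw [show 3*(2*c+1)^2 = 12*(c*c) + 12*c + 3 from by ring]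
    rw [show (2*c+2) % 2 = 0 from by omega]
    omega
  · have hk : k1 = c + 2 := by omega
    have hn1 : 2*c+3 - 1 = 2*c+2 := by omega
    subst hk
    rw [hn1] at e1 e3 e4 ⊢
    rw [show 2*c+2-1 = 2*c+1 from by omega] at e3
    rw [show (c+2) * (2*c+2) = 2*(c*c) + 6*c + 4 from by ring] at e1
    rw [show c+2-1 = c+1 from by omega, show (c+2) * (c+1) = c*c + 3*c + 2 from by ring] at e2
    rw [show (2*c+2) * (2*c+1) = 4*(c*c) + 6*c + 2 from by ring] at e3
    rw [show 3*(2*c+2)^2 = 12*(c*c) + 24*c + 12 from by ring]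
    rw [show (2*c+3) % 2 = 1 from by omega]
    omega

private lemma bistar_D_pi0 [NeZero n] (hn : 2 ≤ n) :
    D (bistarG n ((n+1)/2)) (Equiv.subRight (1 : Fin n)) = (3*(n-1)^2 + 1 - n % 2)/4 := by
  rw [D, bistar_sum hn (edgeLen (Equiv.subRight (1 : Fin n)))]
  rw [← bistar_lower_calc n hn]
  apply Finset.sum_congr rfl
  intro i hi
  rw [Finset.mem_range] at hi
  have hv : ∀ m : ℕ, m < n → (((m : ℕ) : Fin n) : ℕ) = m := fun m hm => Fin.val_cast_of_lt hm
  by_cases hc : i < (n+1)/2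
  · rw [bedge, if_pos hc, if_pos hc]
    show ((((Equiv.subRight (1 : Fin n)) (((0:ℕ) : Fin n)) : Fin n) : ℤ)
        - (((Equiv.subRight (1 : Fin n)) (((i+1:ℕ) : Fin n)) : Fin n) : ℤ)).natAbs = n-1-i
    have hA : ((Equiv.subRight (1 : Fin n)) (((0:ℕ) : Fin n)) : Fin n).val = n-1 := by
      rw [pi0_val hn, hv 0 (by omega), Nat.zero_add, Nat.mod_eq_of_lt (by omega)]
    have hB : ((Equiv.subRight (1 : Fin n)) (((i+1:ℕ) : Fin n)) : Fin n).val = i := by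
      rw [pi0_val hn, hv (i+1) (by omega), show i+1+(n-1) = n+i from by omega,
        Nat.add_mod_left, Nat.mod_eq_of_lt (by omega)]
    omega
  · rw [bedge, if_neg hc, if_neg hc]
    show ((((Equiv.subRight (1 : Fin n)) (((1:ℕ) : Fin n)) : Fin n) : ℤ)
        - (((Equiv.subRight (1 : Fin n)) (((i+1:ℕ) : Fin n)) : Fin n) : ℤ)).natAbs = i
    have hA : ((Equiv.subRight (1 : Fin n)) (((1:ℕ) : Fin n)) : Fin n).val = 0 := by
      rw [pi0_val hn, hv 1 (by omega), show 1+(n-1) = n from by omega, Nat.mod_self]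
    have hB : ((Equiv.subRight (1 : Fin n)) (((i+1:ℕ) : Fin n)) : Fin n).val = i := by
      rw [pi0_val hn, hv (i+1) (by omega), show i+1+(n-1) = n+i from by omega,
        Nat.add_mod_left, Nat.mod_eq_of_lt (by omega)]
    omega

end Bistar

private lemma D_zero_of_small {n : ℕ} (hn : n ≤ 1) (G : SimpleGraph (Fin n))
    [DecidableRel G.Adj] (π : Equiv.Perm (Fin n)) : D G π = 0 := by
  rw [D]
  have h : G.edgeFinset = ∅ := by
    ext e
    induction e with
    | _ u v =>
      simp only [SimpleGraph.mem_edgeFinset, SimpleGraph.mem_edgeSet, Finset.notMem_empty,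
        iff_false]
      intro h
      exact h.ne (Fin.ext (by have := u.is_lt; have := v.is_lt; omega))
  rw [h, Finset.sum_empty]

/-- For any tree on `n` vertices, `D_max ≤ (3(n-1)² + 1 - (n mod 2))/4`,
with equality achieved by the balanced bistar tree (hub degrees `⌈n/2⌉` and `⌊n/2⌋`). -/
theorem Dmax_le_balanced_bistar (n : ℕ) :
    (∀ (G : SimpleGraph (Fin n)) (_ : DecidableRel G.Adj), G.IsTree →
      Dmax G ≤ (3 * (n - 1) ^ 2 + 1 - n % 2) / 4) ∧
    Dmax (bistarG n ((n + 1) / 2)) = (3 * (n - 1) ^ 2 + 1 - n % 2) / 4 := by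
  by_cases hn : 2 ≤ n
  · haveI : NeZero n := ⟨by omega⟩
    constructor
    · intro G inst hT
      letI := inst
      unfold Dmax
      apply Finset.sup_le
      intro π _
      have hcard : G.edgeFinset.card + 1 = n := by
        have h := hT.card_edgeFinset
        rwa [Fintype.card_fin] at h
      have hdeg : ∀ v, 0 < G.degree v := by
        intro v
        rw [SimpleGraph.degree_pos_iff_exists_adj]
        obtain ⟨u, hu⟩ : ∃ u : Fin n, u ≠ v := by
          by_cases h0 : v.val = 0
          · exact ⟨⟨1, by omega⟩, fun h => by
              have := congrArg Fin.val h; simp at this; omega⟩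
          · exact ⟨⟨0, by omega⟩, fun h => by
              have := congrArg Fin.val h; simp at this; omega⟩
        obtain ⟨p⟩ := hT.isConnected.preconnected v u
        cases p with
        | nil => exact absurd rfl hu.symm
        | cons h _ => exact ⟨_, h⟩
      exact genUB hn G hcard hdeg π
    · apply le_antisymm
      · unfold Dmax
        apply Finset.sup_le
        intro π _
        exact genUB hn _ (bistar_card hn) (fun v => bistar_deg_pos hn v) π
      · calc (3 * (n - 1) ^ 2 + 1 - n % 2) / 4
            = D (bistarG n ((n+1)/2)) (Equiv.subRight (1 : Fin n)) :=
              (bistar_D_pi0 hn).symm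
          _ ≤ Dmax (bistarG n ((n+1)/2)) := Finset.le_sup (Finset.mem_univ _)
  · have hn1 : n ≤ 1 := by omega
    have hrhs : (3 * (n - 1) ^ 2 + 1 - n % 2) / 4 = 0 := by interval_cases n <;> rfl
    constructor
    · intro G inst hT
      letI := inst
      rw [hrhs]
      unfold Dmax
      apply Finset.sup_le
      intro π _
      exact (D_zero_of_small hn1 G π).le
    · rw [hrhs]
      apply le_antisymm
      · show Finset.univ.sup (D (bistarG n ((n+1)/2))) ≤ 0
        apply Finset.sup_le
        intro π _
        exact (D_zero_of_small hn1 _ π).le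
      · exact Nat.zero_le _
end

section
/- Let g be a graph on n vertices, let vertex i have degree kᵢ, and fix any linear arrangement π. Then the sum of lengths of the edges incident to vertex i is at least (kᵢ²/2 + kᵢ + (kᵢ mod 2)/2)/2. -/
open Finset

lemma sum_distinct_pos (s : Finset ℕ) (h : ∀ x ∈ s, 1 ≤ x) :
    s.card * (s.card + 1) ≤ 2 * ∑ x ∈ s, x := by
  induction s using Finset.strongInduction with
  | _ s ih =>
    rcases s.eq_empty_or_nonempty with rfl | hs
    · simp
    · set m := s.max' hs with hm
      have hmem : m ∈ s := s.max'_mem hs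
      have hsub : s ⊆ Finset.Icc 1 m := fun x hx =>
        Finset.mem_Icc.mpr ⟨h x hx, Finset.le_max' s x hx⟩
      have hcard : s.card ≤ m := by
        have := Finset.card_le_card hsub
        simpa using this
      have hih := ih (s.erase m) (Finset.erase_ssubset hmem)
        (fun x hx => h x (Finset.mem_of_mem_erase hx))
      have hsum : ∑ x ∈ s, x = m + ∑ x ∈ s.erase m, x :=
        (Finset.add_sum_erase s id hmem).symm
      have hc : s.card = (s.erase m).card + 1 := by
        rw [Finset.card_erase_of_mem hmem]
        have := Finset.card_pos.mpr hs
        omega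
      nlinarith [hih, hsum, hc, hcard]

lemma side_bound {n : ℕ} (π : Equiv.Perm (Fin n)) (i : Fin n) (T : Finset (Fin n))
    (hinj : ∀ v ∈ T, ∀ w ∈ T,
      ((π i : ℤ) - (π v : ℤ)).natAbs = ((π i : ℤ) - (π w : ℤ)).natAbs → v = w)
    (hpos : ∀ v ∈ T, v ≠ i) :
    T.card * (T.card + 1) ≤ 2 * ∑ v ∈ T, ((π i : ℤ) - (π v : ℤ)).natAbs := by
  set d : Fin n → ℕ := fun v => ((π i : ℤ) - (π v : ℤ)).natAbs with hd
  have himg : ∑ x ∈ T.image d, x = ∑ v ∈ T, d v := Finset.sum_image hinj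
  have hcard : (T.image d).card = T.card := Finset.card_image_of_injOn hinj
  have h1 : ∀ x ∈ T.image d, 1 ≤ x := by
    intro x hx
    obtain ⟨v, hv, rfl⟩ := Finset.mem_image.mp hx
    have : π v ≠ π i := fun h => (hpos v hv) (π.injective h)
    have : (π v : ℤ) ≠ (π i : ℤ) := by
      intro h; exact this (Fin.ext (by exact_mod_cast h))
    simp only [hd]
    omega
  have := sum_distinct_pos (T.image d) h1
  rw [himg, hcard] at this
  exact this


/-- In any graph on `n` vertices, for any vertex `i` of degree `kᵢ` and any
linear arrangement `π`, the sum of lengths of the edges incident to `i` is at least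
`(kᵢ²/2 + kᵢ + (kᵢ mod 2)/2)/2`. -/
theorem Dinc_lower_bound (n : ℕ) (G : SimpleGraph (Fin n)) [DecidableRel G.Adj]
    (i : Fin n) (π : Equiv.Perm (Fin n)) :
    ((G.degree i : ℚ) ^ 2 / 2 + (G.degree i : ℚ) +
        ((G.degree i % 2 : ℕ) : ℚ) / 2) / 2 ≤ (Dinc G i π : ℚ) := by
  classical
  set N := G.neighborFinset i with hN
  set L := N.filter (fun v => π v < π i) with hL
  set R := N.filter (fun v => ¬ π v < π i) with hR
  have hni : ∀ v ∈ N, v ≠ i := by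
    intro v hv
    exact fun h => (G.loopless.irrefl i) (by simpa [h] using (G.mem_neighborFinset i v).mp hv)
  -- injectivity on each side
  have hinjL : ∀ v ∈ L, ∀ w ∈ L,
      ((π i : ℤ) - (π v : ℤ)).natAbs = ((π i : ℤ) - (π w : ℤ)).natAbs → v = w := by
    intro v hv w hw h
    rw [hL, Finset.mem_filter] at hv hw
    have hv2 : (π v : ℤ) < (π i : ℤ) := by exact_mod_cast hv.2
    have hw2 : (π w : ℤ) < (π i : ℤ) := by exact_mod_cast hw.2
    have : (π v : ℤ) = (π w : ℤ) := by omega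
    exact π.injective (Fin.ext (by exact_mod_cast this))
  have hinjR : ∀ v ∈ R, ∀ w ∈ R,
      ((π i : ℤ) - (π v : ℤ)).natAbs = ((π i : ℤ) - (π w : ℤ)).natAbs → v = w := by
    intro v hv w hw h
    rw [hR, Finset.mem_filter] at hv hw
    have hv2 : (π i : ℤ) ≤ (π v : ℤ) := by
      have := hv.2; push_neg at this; exact_mod_cast this
    have hw2 : (π i : ℤ) ≤ (π w : ℤ) := by
      have := hw.2; push_neg at this; exact_mod_cast this
    have : (π v : ℤ) = (π w : ℤ) := by omega
    exact π.injective (Fin.ext (by exact_mod_cast this))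
  have bL := side_bound π i L hinjL (fun v hv => hni v (Finset.mem_of_mem_filter v hv))
  have bR := side_bound π i R hinjR (fun v hv => hni v (Finset.mem_of_mem_filter v hv))
  have hsplit : Dinc G i π = (∑ v ∈ L, ((π i : ℤ) - (π v : ℤ)).natAbs)
      + (∑ v ∈ R, ((π i : ℤ) - (π v : ℤ)).natAbs) := by
    rw [Dinc, hL, hR]
    exact (Finset.sum_filter_add_sum_filter_not N _ _).symm
  have hcardsplit : G.degree i = L.card + R.card := by
    rw [SimpleGraph.degree, ← hN, hL, hR]
    exact (Finset.card_filter_add_card_filter_not _).symm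
  -- now arithmetic
  rw [hsplit, hcardsplit]
  set a := L.card with ha'
  set b := R.card with hb'
  set A := ∑ v ∈ L, ((π i : ℤ) - (π v : ℤ)).natAbs with hA'
  set B := ∑ v ∈ R, ((π i : ℤ) - (π v : ℤ)).natAbs with hB'
  clear_value a b A B
  clear ha' hb' hA' hB' hsplit hcardsplit hinjL hinjR hni hL hR hN
  have haA : (a : ℚ) * (a + 1) ≤ 2 * A := by exact_mod_cast bL
  have hbB : (b : ℚ) * (b + 1) ≤ 2 * B := by exact_mod_cast bR
  clear bL bR
  rcases Nat.mod_two_eq_zero_or_one (a + b) with hk | hk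
  · rw [hk]
    push_cast
    nlinarith [sq_nonneg ((a : ℚ) - b)]
  · rw [hk]
    have hab : a ≠ b := by omega
    have h1 : 1 ≤ ((a : ℚ) - b) ^ 2 := by
      rcases Nat.lt_or_ge a b with h | h
      · have : (a : ℚ) + 1 ≤ b := by exact_mod_cast h
        nlinarith
      · have h2 : b < a := lt_of_le_of_ne h (Ne.symm hab)
        have : (b : ℚ) + 1 ≤ a := by exact_mod_cast h2
        nlinarith
    push_cast
    nlinarith
end

section
/- For any tree t on n ≥ 2 vertices, the minimum over all linear arrangements of the sum of edge lengths satisfies D_min(t) ≥ (1/4)·( (1/2)·Σᵢ kᵢ² + 2(n-1) + q/2 ), where kᵢ is the degree of vertex i and q is the number of vertices of odd degree. -/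
open Finset

/-- Gauss-type sum A -/
lemma sumA (m : ℕ) : ∑ d ∈ range m, (2*m - 2*d) = m*(m+1) := by
  induction m with
  | zero => simp
  | succ m ih =>
    rw [Finset.sum_range_succ' (fun d => 2*(m+1) - 2*d) m]
    have h : ∀ d ∈ range m, 2*(m+1) - 2*(d+1) = 2*m - 2*d := by intro d hd; omega
    rw [Finset.sum_congr rfl h, ih]
    ring_nf
    omega

lemma sumB (m : ℕ) : ∑ d ∈ range (m+1), (2*m+1 - 2*d) = (m+1)*(m+1) := by
  induction m with
  | zero => simp
  | succ m ih =>
    rw [Finset.sum_range_succ' (fun d => 2*(m+1)+1 - 2*d) (m+1)]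
    have h : ∀ d ∈ range (m+1), 2*(m+1)+1 - 2*(d+1) = 2*m+1 - 2*d := by intro d hd; omega
    rw [Finset.sum_congr rfl h, ih]
    ring_nf
    omega

/-- lower bound function -/
def fLB (k : ℕ) : ℕ := ((k+1)/2) * (k/2 + 1)

lemma sum_arith (k : ℕ) : ∑ d ∈ range ((k+1)/2), (k - 2*d) = fLB k := by
  obtain ⟨m, rfl | rfl⟩ := Nat.even_or_odd' k
  · have h1 : (2*m+1)/2 = m := by omega
    have h2 : fLB (2*m) = m*(m+1) := by unfold fLB; congr 1 <;> omega
    rw [h1, h2, ← sumA m]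
  · have h1 : (2*m+1+1)/2 = m+1 := by omega
    have h2 : fLB (2*m+1) = (m+1)*(m+1) := by
      unfold fLB
      have e1 : (2*m+1+1)/2 = m+1 := by omega
      have e2 : (2*m+1)/2 = m := by omega
      rw [e1, e2]
    rw [h1, h2, ← sumB m]

lemma four_fLB (k : ℕ) : 4 * fLB k = k*k + 2*k + k % 2 := by
  unfold fLB
  obtain ⟨m, rfl | rfl⟩ := Nat.even_or_odd' k
  · have h1 : (2*m+1)/2 = m := by omega
    have h2 : (2*m)/2 = m := by omega
    rw [h1, h2]; ring_nf; omega
  · have h1 : (2*m+1+1)/2 = m+1 := by omega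
    have h2 : (2*m+1)/2 = m := by omega
    rw [h1, h2]; ring_nf; omega

lemma lb_sum {α : Type*} [DecidableEq α] (S : Finset α) (g : α → ℕ)
    (h1 : ∀ v ∈ S, 1 ≤ g v)
    (h2 : ∀ e : ℕ, (S.filter fun v => g v = e).card ≤ 2) :
    fLB S.card ≤ ∑ v ∈ S, g v := by
  set k := S.card with hk
  set M := (k+1)/2 with hM
  -- Step A : layered bound
  have stepA : ∑ d ∈ range M, (S.filter fun v => d < g v).card ≤ ∑ v ∈ S, g v := by
    have : ∀ d, (S.filter fun v => d < g v).card = ∑ v ∈ S, if d < g v then 1 else 0 := by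
      intro d; rw [Finset.card_filter]
    calc ∑ d ∈ range M, (S.filter fun v => d < g v).card
        = ∑ d ∈ range M, ∑ v ∈ S, (if d < g v then 1 else 0) := by
          exact Finset.sum_congr rfl fun d _ => this d
      _ = ∑ v ∈ S, ∑ d ∈ range M, (if d < g v then 1 else 0) := Finset.sum_comm
      _ ≤ ∑ v ∈ S, g v := by
          apply Finset.sum_le_sum
          intro v hv
          have : ((range M).filter fun d => d < g v) = range (min (g v) M) := by
            ext d; simp; omega
          calc ∑ d ∈ range M, (if d < g v then 1 else 0)
              = ((range M).filter fun d => d < g v).card := (Finset.card_filter _ _).symm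
            _ = min (g v) M := by rw [this, Finset.card_range]
            _ ≤ g v := min_le_left _ _
  -- Step B : each layer is large
  have stepB : ∀ d, k - 2*d ≤ (S.filter fun v => d < g v).card := by
    intro d
    have hsplit : (S.filter fun v => d < g v).card + (S.filter fun v => ¬ d < g v).card = k := by
      rw [Finset.card_filter_add_card_filter_not]
    have hle : (S.filter fun v => ¬ d < g v).card ≤ 2*d := by
      have hsub : (S.filter fun v => ¬ d < g v) ⊆
          (Finset.Icc 1 d).biUnion (fun e => S.filter fun v => g v = e) := by
        intro v hv
        simp only [Finset.mem_filter, not_lt] at hv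
        simp only [Finset.mem_biUnion, Finset.mem_Icc, Finset.mem_filter]
        exact ⟨g v, ⟨h1 v hv.1, hv.2⟩, hv.1, rfl⟩
      calc (S.filter fun v => ¬ d < g v).card
          ≤ ((Finset.Icc 1 d).biUnion (fun e => S.filter fun v => g v = e)).card :=
            Finset.card_le_card hsub
        _ ≤ ∑ e ∈ Finset.Icc 1 d, (S.filter fun v => g v = e).card := Finset.card_biUnion_le
        _ ≤ ∑ e ∈ Finset.Icc 1 d, 2 := Finset.sum_le_sum fun e _ => h2 e
        _ = 2*d := by rw [Finset.sum_const, smul_eq_mul, Nat.card_Icc]; omega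
    omega
  -- combine
  have sum_arith : ∑ d ∈ range M, (k - 2*d) = fLB k := sum_arith k
  calc fLB k = ∑ d ∈ range M, (k - 2*d) := sum_arith.symm
    _ ≤ ∑ d ∈ range M, (S.filter fun v => d < g v).card :=
        Finset.sum_le_sum fun d _ => stepB d
    _ ≤ ∑ v ∈ S, g v := stepA

lemma vertex_lb {n : ℕ} (G : SimpleGraph (Fin n)) [DecidableRel G.Adj] (i : Fin n)
    (π : Equiv.Perm (Fin n)) : fLB (G.degree i) ≤ Dinc G i π := by
  rw [← SimpleGraph.card_neighborFinset_eq_degree]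
  apply lb_sum
  · intro v hv
    rw [SimpleGraph.mem_neighborFinset] at hv
    have hne : v ≠ i := hv.ne'
    have : π v ≠ π i := fun h => hne (π.injective h)
    have : ((π v : ℤ)) ≠ ((π i : ℤ)) := by
      intro h; exact this (Fin.ext (by exact_mod_cast h))
    omega
  · intro e
    have : ∀ v ∈ (G.neighborFinset i).filter
        (fun v => ((π i : ℤ) - (π v : ℤ)).natAbs = e),
        (decide ((π v : ℤ) = (π i : ℤ) + e)) ∈ (Finset.univ : Finset Bool) := by
      intro v _; exact Finset.mem_univ _
    calc ((G.neighborFinset i).filter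
          (fun v => ((π i : ℤ) - (π v : ℤ)).natAbs = e)).card
        ≤ (Finset.univ : Finset Bool).card := by
          apply Finset.card_le_card_of_injOn
            (fun v => decide ((π v : ℤ) = (π i : ℤ) + e)) this
          intro v hv w hw hvw
          simp only [Finset.coe_filter, Set.mem_setOf_eq] at hv hw
          simp only [decide_eq_decide] at hvw
          have hv2 := hv.2; have hw2 := hw.2
          have : (π v : ℤ) = (π w : ℤ) := by
            by_cases hc : (π v : ℤ) = (π i : ℤ) + e
            · rw [hc, hvw.mp hc]
            · have hcw : ¬ (π w : ℤ) = (π i : ℤ) + e := fun h => hc (hvw.mpr h)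
              omega
          have : π v = π w := Fin.ext (by exact_mod_cast this)
          exact π.injective this
      _ = 2 := by simp

lemma handshake {n : ℕ} (G : SimpleGraph (Fin n)) [DecidableRel G.Adj]
    (π : Equiv.Perm (Fin n)) : ∑ i, Dinc G i π = 2 * D G π := by
  classical
  set w : G.Dart → ℕ := fun d => ((π d.fst : ℤ) - (π d.snd : ℤ)).natAbs with hw
  have left : ∑ d : G.Dart, w d = ∑ i, Dinc G i π := by
    rw [← Finset.sum_fiberwise_of_maps_to (g := fun d : G.Dart => d.fst)
      (fun d _ => Finset.mem_univ d.fst) w]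
    apply Finset.sum_congr rfl
    intro i _
    apply Finset.sum_bij (fun (d : G.Dart) (hd : d ∈ Finset.univ.filter (fun d => d.fst = i)) => d.snd)
    · intro d hd
      simp only [Finset.mem_filter, Finset.mem_univ, true_and] at hd
      rw [SimpleGraph.mem_neighborFinset, ← hd]
      exact d.adj
    · intro a ha b hb hab
      simp only [Finset.mem_filter, Finset.mem_univ, true_and] at ha hb
      exact SimpleGraph.Dart.ext _ _ (Prod.ext (ha.trans hb.symm) hab)
    · intro u hu
      rw [SimpleGraph.mem_neighborFinset] at hu
      exact ⟨⟨(i, u), hu⟩, by simp, rfl⟩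
    · intro d hd
      simp only [Finset.mem_filter, Finset.mem_univ, true_and] at hd
      rw [hw]; simp [hd]
  have right : ∑ d : G.Dart, w d = 2 * D G π := by
    rw [← Finset.sum_fiberwise_of_maps_to (g := fun d : G.Dart => d.edge)
      (fun d _ => (SimpleGraph.mem_edgeFinset).mpr d.edge_mem) w]
    rw [D, Finset.mul_sum]
    apply Finset.sum_congr rfl
    intro e he
    rw [SimpleGraph.mem_edgeFinset] at he
    induction e with
    | _ v u =>
      have hadj : G.Adj v u := he
      set d0 : G.Dart := ⟨(v, u), hadj⟩ with hd0
      have hfib : Finset.univ.filter (fun d : G.Dart => d.edge = s(v, u)) = {d0, d0.symm} := by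
        have := SimpleGraph.Dart.edge_fiber d0
        convert this using 2
        exact Iff.rfl
      rw [hfib, Finset.sum_pair d0.symm_ne.symm]
      have h1 : w d0 = edgeLen π s(v, u) := by simp [hw, edgeLen, hd0]
      have h2 : w d0.symm = edgeLen π s(v, u) := by
        simp [hw, edgeLen, hd0, SimpleGraph.Dart.symm]
        omega
      rw [h1, h2]; ring
  omega


/-- For any tree on `n ≥ 2` vertices,
`D_min ≥ (1/4)((1/2)Σᵢ kᵢ² + 2(n-1) + q/2)` where `q` is the number of odd-degree
vertices. -/
theorem Dmin_degree_method (n : ℕ) (hn : 2 ≤ n) (G : SimpleGraph (Fin n))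
    [DecidableRel G.Adj] (hT : G.IsTree) :
    (1 / 4 : ℚ) * ((1 / 2) * ∑ v : Fin n, (G.degree v : ℚ) ^ 2 + 2 * ((n : ℚ) - 1) +
        (((Finset.univ.filter fun v : Fin n => G.degree v % 2 = 1).card : ℕ) : ℚ) / 2) ≤
      (Dmin G : ℚ) := by
  classical
  obtain ⟨π, -, hπ⟩ := Finset.exists_mem_eq_inf'
    (⟨Equiv.refl (Fin n), Finset.mem_univ _⟩ : (Finset.univ : Finset (Equiv.Perm (Fin n))).Nonempty)
    (D G)
  have hDmin : Dmin G = D G π := hπ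
  have key : ∑ i, fLB (G.degree i) ≤ 2 * D G π := by
    rw [← handshake G π]
    exact Finset.sum_le_sum fun i _ => vertex_lb G i π
  have h4 : ∑ i, (G.degree i * G.degree i + 2 * G.degree i + G.degree i % 2)
      = 4 * ∑ i, fLB (G.degree i) := by
    rw [Finset.mul_sum]
    exact Finset.sum_congr rfl fun i _ => (four_fLB _).symm
  have hdeg : ∑ i, G.degree i = 2 * (n - 1) := by
    have h1 := G.sum_degrees_eq_twice_card_edges
    have h2 := hT.card_edgeFinset
    rw [Fintype.card_fin] at h2
    omega
  have hq : ∑ i : Fin n, (G.degree i % 2)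
      = (Finset.univ.filter fun v : Fin n => G.degree v % 2 = 1).card := by
    rw [Finset.card_filter]
    exact Finset.sum_congr rfl fun i _ => by
      rcases Nat.mod_two_eq_zero_or_one (G.degree i) with h | h <;> simp [h]
  have hsplit : ∑ i, (G.degree i * G.degree i + 2 * G.degree i + G.degree i % 2)
      = (∑ i, G.degree i * G.degree i) + 2 * (∑ i, G.degree i) + ∑ i : Fin n, (G.degree i % 2) := by
    rw [Finset.sum_add_distrib, Finset.sum_add_distrib, Finset.mul_sum]
  have main : (∑ i, G.degree i * G.degree i) + 4 * (n - 1)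
      + (Finset.univ.filter fun v : Fin n => G.degree v % 2 = 1).card ≤ 8 * D G π := by
    omega
  have hcast : ((∑ i, G.degree i * G.degree i : ℕ) : ℚ) + 4 * ((n : ℚ) - 1)
      + ((Finset.univ.filter fun v : Fin n => G.degree v % 2 = 1).card : ℚ)
      ≤ 8 * (D G π : ℚ) := by
    have hn1 : ((n - 1 : ℕ) : ℚ) = (n : ℚ) - 1 := by
      have : 1 ≤ n := by omega
      push_cast [Nat.cast_sub this]
      ring
    calc ((∑ i, G.degree i * G.degree i : ℕ) : ℚ) + 4 * ((n : ℚ) - 1)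
        + ((Finset.univ.filter fun v : Fin n => G.degree v % 2 = 1).card : ℚ)
        = (((∑ i, G.degree i * G.degree i) + 4 * (n - 1)
          + (Finset.univ.filter fun v : Fin n => G.degree v % 2 = 1).card : ℕ) : ℚ) := by
          push_cast [hn1]; ring
      _ ≤ ((8 * D G π : ℕ) : ℚ) := by exact_mod_cast main
      _ = 8 * (D G π : ℚ) := by push_cast; ring
  have hsq : ∑ v : Fin n, (G.degree v : ℚ) ^ 2 = ((∑ i, G.degree i * G.degree i : ℕ) : ℚ) := by
    push_cast
    exact Finset.sum_congr rfl fun i _ => by ring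
  rw [hDmin]
  rw [hsq]
  linarith
end

section
/- For a quasistar tree on n ≥ 4 vertices (bistar with hub degrees n-2 and 2), the minimum sum of edge lengths over all linear arrangements equals ⌊(n-1)²/4⌋ + 1, and the maximum equals (n+3)(n-2)/2. -/
open Finset

lemma sumAbs_le (n k : ℕ) (h : n ≤ k + 1) :
    2 * ∑ p : Fin n, |(k : ℤ) - (p : ℕ)| = 2 * n * k - n * (n - 1) := by
  induction n with
  | zero => simp
  | succ m ih =>
    rw [Fin.sum_univ_castSucc]
    simp only [Fin.coe_castSucc, Fin.val_last]
    have hm : m ≤ k := by omega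
    have habs : |(k:ℤ) - (m:ℤ)| = (k:ℤ) - (m:ℤ) :=
      abs_of_nonneg (sub_nonneg.mpr (by exact_mod_cast hm))
    rw [habs]
    have ih' := ih (by omega)
    push_cast at ih' ⊢
    linear_combination ih'

lemma sumAbs (a t : ℕ) :
    2 * ∑ p : Fin (a + 1 + t), |(a : ℤ) - (p : ℕ)| = a * (a + 1) + t * (t + 1) := by
  induction t with
  | zero =>
    have := sumAbs_le (a + 1) a (by omega)
    push_cast at *
    linear_combination this
  | succ s ih =>
    rw [show a + 1 + (s + 1) = (a + 1 + s) + 1 by omega, Fin.sum_univ_castSucc]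
    simp only [Fin.coe_castSucc, Fin.val_last]
    have habs : |(a:ℤ) - ((a + 1 + s : ℕ) : ℤ)| = (s : ℤ) + 1 := by
      rw [abs_of_nonpos] <;> push_cast <;> omega
    rw [habs]
    push_cast at ih ⊢
    linear_combination ih

lemma sumAbs' (n a : ℕ) (h : a < n) :
    2 * ∑ p : Fin n, |(a : ℤ) - (p : ℕ)| = a * (a + 1) + (n - 1 - a : ℕ) * ((n - 1 - a : ℕ) + 1) := by
  obtain ⟨t, rfl⟩ : ∃ t, n = a + 1 + t := ⟨n - 1 - a, by omega⟩
  rw [show a + 1 + t - 1 - a = t by omega]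
  exact_mod_cast sumAbs a t

lemma exists_perm_three {α : Type*} [DecidableEq α] (i j k a b c : α)
    (hij : i ≠ j) (hik : i ≠ k) (hjk : j ≠ k)
    (hab : a ≠ b) (hac : a ≠ c) (hbc : b ≠ c) :
    ∃ π : Equiv.Perm α, π i = a ∧ π j = b ∧ π k = c := by
  set σ1 := Equiv.swap i a with hσ1
  have h1i : σ1 i = a := Equiv.swap_apply_left i a
  set b1 := σ1.symm b with hb1
  have hσ1b1 : σ1 b1 = b := Equiv.apply_symm_apply σ1 b
  have hb1i : b1 ≠ i := fun h => hab (by rw [← h1i, ← hσ1b1, h])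
  set σ2 := Equiv.swap j b1 with hσ2
  set π2 := σ1 * σ2 with hπ2
  have hπ2i : π2 i = a := by
    have : σ2 i = i := Equiv.swap_apply_of_ne_of_ne hij (Ne.symm hb1i)
    simp [hπ2, Equiv.Perm.mul_apply, this, h1i]
  have hπ2j : π2 j = b := by
    have : σ2 j = b1 := Equiv.swap_apply_left j b1
    simp [hπ2, Equiv.Perm.mul_apply, this, hσ1b1]
  set c1 := π2.symm c with hc1
  have hπ2c1 : π2 c1 = c := Equiv.apply_symm_apply π2 c
  have hc1i : c1 ≠ i := fun h => hac (by rw [← hπ2i, ← hπ2c1, h])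
  have hc1j : c1 ≠ j := fun h => hbc (by rw [← hπ2j, ← hπ2c1, h])
  refine ⟨π2 * Equiv.swap k c1, ?_, ?_, ?_⟩
  · have : Equiv.swap k c1 i = i := Equiv.swap_apply_of_ne_of_ne hik (Ne.symm hc1i)
    simp [Equiv.Perm.mul_apply, this, hπ2i]
  · have : Equiv.swap k c1 j = j := Equiv.swap_apply_of_ne_of_ne hjk (Ne.symm hc1j)
    simp [Equiv.Perm.mul_apply, this, hπ2j]
  · have : Equiv.swap k c1 k = c1 := Equiv.swap_apply_left k c1
    simp [Equiv.Perm.mul_apply, this, hπ2c1]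

lemma edge_char (n : ℕ) (hn : 4 ≤ n) :
    (bistarG n (n-2)).edgeFinset =
      ((Finset.univ.filter (fun v : Fin n => 1 ≤ (v:ℕ) ∧ (v:ℕ) ≤ n-2)).image
        (fun v => s((⟨0, by omega⟩ : Fin n), v)))
      ∪ {s((⟨1, by omega⟩ : Fin n), (⟨n-1, by omega⟩ : Fin n))} := by
  ext e
  induction e with
  | _ u v =>
  have hu := u.isLt; have hv := v.isLt
  rw [SimpleGraph.mem_edgeFinset, SimpleGraph.mem_edgeSet]
  simp only [SimpleGraph.mem_edgeFinset, SimpleGraph.mem_edgeSet, Finset.mem_union,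
    Finset.mem_image, Finset.mem_filter, Finset.mem_univ, true_and, Finset.mem_singleton,
    Sym2.eq_iff, bistarG, ne_eq, Fin.ext_iff]
  constructor
  · rintro ⟨hne, h⟩
    rcases h with ⟨h0, h1⟩ | ⟨h0, h1⟩ | ⟨h0, h1⟩ | ⟨h0, h1⟩
    · exact Or.inl ⟨v, ⟨by omega, by omega⟩, Or.inl ⟨by omega, by omega⟩⟩
    · exact Or.inl ⟨u, ⟨by omega, by omega⟩, Or.inr ⟨by omega, by omega⟩⟩
    · exact Or.inr (Or.inl ⟨by omega, by omega⟩)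
    · exact Or.inr (Or.inr ⟨by omega, by omega⟩)
  · rintro (⟨x, ⟨hx1, hx2⟩, ⟨h1, h2⟩ | ⟨h1, h2⟩⟩ | ⟨h1, h2⟩ | ⟨h1, h2⟩) <;>
      exact ⟨by omega, by omega⟩

lemma D_eq (n : ℕ) (hn : 4 ≤ n) (z0 z1 zl : Fin n)
    (h0 : (z0 : ℕ) = 0) (h1 : (z1 : ℕ) = 1) (hl : (zl : ℕ) = n - 1)
    (π : Equiv.Perm (Fin n)) :
    (D (bistarG n (n-2)) π : ℤ)
      = (∑ p : Fin n, |((π z0 : ℕ) : ℤ) - (p : ℕ)|)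
        - |((π z0 : ℕ) : ℤ) - ((π zl : ℕ) : ℤ)|
        + |((π z1 : ℕ) : ℤ) - ((π zl : ℕ) : ℤ)| := by
  have hn0 : 0 < n := Nat.lt_of_lt_of_le (by norm_num) hn
  have hn1 : 1 < n := Nat.lt_of_lt_of_le (by norm_num) hn
  have hnl : n - 1 < n := Nat.sub_lt hn0 (by norm_num)
  obtain rfl : z0 = ⟨0, hn0⟩ := Fin.ext h0
  obtain rfl : z1 = ⟨1, hn1⟩ := Fin.ext h1
  obtain rfl : zl = ⟨n-1, hnl⟩ := Fin.ext hl
  clear h0 h1 hl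
  set z0 : Fin n := ⟨0, hn0⟩ with hz0
  set z1 : Fin n := ⟨1, hn1⟩ with hz1
  set zl : Fin n := ⟨n-1, hnl⟩ with hzl
  have hdisj : Disjoint
      ((Finset.univ.filter (fun v : Fin n => 1 ≤ (v:ℕ) ∧ (v:ℕ) ≤ n-2)).image
        (fun v => s(z0, v))) {s(z1, zl)} := by
    simp only [Finset.disjoint_singleton_right, Finset.mem_image, Finset.mem_filter,
      Finset.mem_univ, true_and, Sym2.eq_iff, Fin.ext_iff, hz0, hz1, hzl]
    rintro ⟨x, ⟨hx1, hx2⟩, ⟨ha1, ha2⟩ | ⟨ha1, ha2⟩⟩ <;> omega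
  have hinj : ∀ x ∈ (Finset.univ.filter (fun v : Fin n => 1 ≤ (v:ℕ) ∧ (v:ℕ) ≤ n-2)),
      ∀ y ∈ (Finset.univ.filter (fun v : Fin n => 1 ≤ (v:ℕ) ∧ (v:ℕ) ≤ n-2)),
      s(z0, x) = s(z0, y) → x = y := by
    intro x hx y hy h
    simp only [Finset.mem_filter, Finset.mem_univ, true_and] at hx hy
    rw [Sym2.eq_iff] at h
    rcases h with ⟨-, h⟩ | ⟨ha1, ha2⟩
    · exact h
    · exfalso; rw [Fin.ext_iff] at ha1; simp [hz0] at ha1; omega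
  rw [D, edge_char n hn, Finset.sum_union hdisj, Finset.sum_image hinj, Finset.sum_singleton]
  have hlen : ∀ u v : Fin n, edgeLen π s(u, v) = ((π u : ℤ) - (π v : ℤ)).natAbs := by
    intro u v; rfl
  push_cast [hlen, Int.natCast_natAbs]
  have key : ∑ v ∈ (Finset.univ.filter (fun v : Fin n => 1 ≤ (v:ℕ) ∧ (v:ℕ) ≤ n-2)),
      |((π z0 : ℕ) : ℤ) - ((π v : ℕ) : ℤ)|
      = (∑ p : Fin n, |((π z0 : ℕ) : ℤ) - ((p : ℕ) : ℤ)|) - |((π z0 : ℕ) : ℤ) - ((π zl : ℕ) : ℤ)| := by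
    have hsub : (Finset.univ.filter (fun v : Fin n => 1 ≤ (v:ℕ) ∧ (v:ℕ) ≤ n-2))
        = Finset.univ \ {z0, zl} := by
      ext x
      simp only [Finset.mem_filter, Finset.mem_univ, true_and, Finset.mem_sdiff,
        Finset.mem_insert, Finset.mem_singleton, Fin.ext_iff, hz0, hzl]
      have := x.isLt
      omega
    rw [hsub, Finset.sum_sdiff_eq_sub (Finset.subset_univ _)]
    have hpair : ∑ x ∈ ({z0, zl} : Finset (Fin n)),
        |((π z0 : ℕ) : ℤ) - ((π x : ℕ) : ℤ)| = |((π z0 : ℕ) : ℤ) - ((π zl : ℕ) : ℤ)| := by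
      rw [Finset.sum_pair (by simp [Fin.ext_iff, hz0, hzl]; omega)]
      simp
    rw [hpair, ← Equiv.sum_comp π (fun p => |((π z0 : ℕ) : ℤ) - ((p : ℕ) : ℤ)|)]
  rw [key]


lemma D_bounds (n : ℕ) (hn : 4 ≤ n) (π : Equiv.Perm (Fin n)) :
    D (bistarG n (n-2)) π ≤ (n+3)*(n-2)/2 ∧ (n-1)^2/4 + 1 ≤ D (bistarG n (n-2)) π := by
  have hn0 : 0 < n := by omega
  have hn1 : 1 < n := by omega
  have hnl : n - 1 < n := by omega
  set z0 : Fin n := ⟨0, hn0⟩ with hz0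
  set z1 : Fin n := ⟨1, hn1⟩ with hz1
  set zl : Fin n := ⟨n-1, hnl⟩ with hzl
  have hD := D_eq n hn z0 z1 zl rfl rfl rfl π
  set dd := D (bistarG n (n-2)) π with hdd
  set a := ((π z0 : Fin n) : ℕ) with ha
  set b := ((π z1 : Fin n) : ℕ) with hb
  set c := ((π zl : Fin n) : ℕ) with hc
  have halt : a < n := (π z0).isLt
  have hblt : b < n := (π z1).isLt
  have hclt : c < n := (π zl).isLt
  have hab : a ≠ b := fun h => by
    have : z0 = z1 := π.injective (Fin.ext h)
    rw [Fin.ext_iff] at this; simp [hz0, hz1] at this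
  have hac : a ≠ c := fun h => by
    have : z0 = zl := π.injective (Fin.ext h)
    rw [Fin.ext_iff] at this; simp [hz0, hzl] at this; omega
  have hbc : b ≠ c := fun h => by
    have : z1 = zl := π.injective (Fin.ext h)
    rw [Fin.ext_iff] at this; simp [hz1, hzl] at this; omega
  set t := n - 1 - a with htdef
  set S := ∑ p : Fin n, |(a : ℤ) - (p : ℕ)| with hSdef
  have hS : 2 * S = a * (a + 1) + (t:ℕ) * ((t:ℕ) + 1) := by
    rw [hSdef, htdef]; exact sumAbs' n a halt
  have ht : (t:ℤ) + 1 + a = n := by omega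
  set A := |(a:ℤ) - (c:ℤ)| with hAdef
  set B := |(b:ℤ) - (c:ℤ)| with hBdef
  clear_value A B S dd
  have hA1 : 1 ≤ A := by
    rw [hAdef]; exact Int.one_le_abs (sub_ne_zero.mpr (by exact_mod_cast hac))
  have hB1 : 1 ≤ B := by
    rw [hBdef]; exact Int.one_le_abs (sub_ne_zero.mpr (by exact_mod_cast hbc))
  have hAle : A ≤ a ∨ A ≤ t := by
    rcases le_total ((c:ℤ)) ((a:ℤ)) with h | h
    · left; rw [hAdef, abs_of_nonneg (by linarith)]
      have : (0:ℤ) ≤ c := by positivity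
      linarith
    · right
      rw [hAdef, abs_of_nonpos (by linarith)]
      have h1 : (c:ℤ) ≤ (n:ℤ) - 1 := by omega
      linarith [ht]
  have hBle : B ≤ (n:ℤ) - 1 := by
    rw [hBdef]
    rcases le_total ((c:ℤ)) ((b:ℤ)) with h | h
    · rw [abs_of_nonneg (by linarith)]; omega
    · rw [abs_of_nonpos (by linarith)]; omega
  have hkey : B ≤ (n:ℤ) - 2 ∨ (1 ≤ (a:ℤ) ∧ (a:ℤ) ≤ (n:ℤ) - 2) := by
    rcases le_total ((c:ℤ)) ((b:ℤ)) with h | h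
    · have hBe : B = (b:ℤ) - c := by rw [hBdef, abs_of_nonneg (by linarith)]
      omega
    · have hBe : B = (c:ℤ) - b := by rw [hBdef, abs_of_nonpos (by linarith)]; ring
      omega
  have haz : (0:ℤ) ≤ a := by positivity
  have htz : (0:ℤ) ≤ t := by positivity
  constructor
  · rw [Nat.le_div_iff_mul_le (by norm_num)]
    zify [show 2 ≤ n by omega]
    rw [show (n:ℤ) = (a:ℤ) + t + 1 from by omega]
    rcases hkey with hk | ⟨hk1, hk2⟩
    · rw [show (n:ℤ) = (a:ℤ) + t + 1 from by omega] at hk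
      linarith [hS, hD, hA1, mul_nonneg haz htz]
    · have htge : (1:ℤ) ≤ t := by omega
      rw [show (n:ℤ) = (a:ℤ) + t + 1 from by omega] at hBle
      linarith [hS, hD, hA1, mul_nonneg (show (0:ℤ) ≤ (a:ℤ) - 1 by omega)
        (show (0:ℤ) ≤ (t:ℤ) - 1 by omega)]
  · have hkey2 : (n-1)^2 < 4 * dd := by
      zify [show 1 ≤ n by omega]
      rw [show (n:ℤ) = (a:ℤ) + t + 1 from by omega]
      rcases hAle with hk | hk
      · linarith [hS, hD, hB1, sq_nonneg ((a:ℤ) - t - 1)]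
      · linarith [hS, hD, hB1, sq_nonneg ((t:ℤ) - a - 1)]
    omega


lemma D_witness (n : ℕ) (hn : 4 ≤ n) (av bv cv : ℕ) (hav : av < n) (hbv : bv < n) (hcv : cv < n)
    (hab : av ≠ bv) (hac : av ≠ cv) (hbc : bv ≠ cv) :
    ∃ π : Equiv.Perm (Fin n), 2 * (D (bistarG n (n-2)) π : ℤ)
      = (av:ℤ) * (av + 1) + ((n-1-av : ℕ) : ℤ) * (((n-1-av : ℕ) : ℤ) + 1)
        - 2 * |(av:ℤ) - (cv:ℤ)| + 2 * |(bv:ℤ) - (cv:ℤ)| := by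
  have hn0 : 0 < n := by omega
  have hn1 : 1 < n := by omega
  have hnl : n - 1 < n := by omega
  set z0 : Fin n := ⟨0, hn0⟩ with hz0
  set z1 : Fin n := ⟨1, hn1⟩ with hz1
  set zl : Fin n := ⟨n-1, hnl⟩ with hzl
  obtain ⟨π, hπ0, hπ1, hπl⟩ := exists_perm_three z0 z1 zl
    (⟨av, hav⟩ : Fin n) (⟨bv, hbv⟩ : Fin n) (⟨cv, hcv⟩ : Fin n)
    (Fin.ne_of_val_ne (show (0:ℕ) ≠ 1 by omega))
    (Fin.ne_of_val_ne (show (0:ℕ) ≠ n - 1 by omega))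
    (Fin.ne_of_val_ne (show (1:ℕ) ≠ n - 1 by omega))
    (Fin.ne_of_val_ne hab) (Fin.ne_of_val_ne hac) (Fin.ne_of_val_ne hbc)
  refine ⟨π, ?_⟩
  have hD := D_eq n hn z0 z1 zl rfl rfl rfl π
  rw [hπ0, hπ1, hπl] at hD
  simp only [Fin.val_mk] at hD
  have hS := sumAbs' n av hav
  linarith [hD, hS]

/-- For a quasistar tree on `n ≥ 4` vertices (bistar with hub degrees
`n-2` and `2`), `D_min = ⌊(n-1)²/4⌋ + 1` and `D_max = (n+3)(n-2)/2`. -/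
theorem quasistar_Dmin_Dmax (n : ℕ) (hn : 4 ≤ n) :
    Dmin (bistarG n (n - 2)) = (n - 1) ^ 2 / 4 + 1 ∧
    Dmax (bistarG n (n - 2)) = (n + 3) * (n - 2) / 2 := by
  constructor
  · -- Dmin
    have hlow : ∀ σ : Equiv.Perm (Fin n), (n-1)^2/4 + 1 ≤ D (bistarG n (n-2)) σ :=
      fun σ => (D_bounds n hn σ).2
    rcases Nat.even_or_odd n with ⟨k, hk⟩ | ⟨k, hk⟩
    · -- n = k + k
      have hk2 : 2 ≤ k := by omega
      obtain ⟨π, hπ⟩ := D_witness n hn k 1 0 (by omega) (by omega) (by omega)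
        (by omega) (by omega) (by omega)
      have habsA : |(k:ℤ) - ((0:ℕ):ℤ)| = (k:ℤ) := by simp
      have habsB : |((1:ℕ):ℤ) - ((0:ℕ):ℤ)| = 1 := by simp
      rw [habsA, habsB, show n - 1 - k = k - 1 from by omega] at hπ
      push_cast [Nat.cast_sub (show 1 ≤ k by omega)] at hπ
      have h2 : 2 * D (bistarG n (n-2)) π = 2*((k-1)*k) + 2 := by
        zify [show 1 ≤ k by omega]
        linarith [hπ]
      have hsq : (n-1)^2 = 4*((k-1)*k) + 1 := by
        obtain ⟨j, rfl⟩ : ∃ j, k = j + 2 := ⟨k - 2, by omega⟩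
        subst hk
        rw [show j + 2 + (j + 2) - 1 = 2*j + 3 from by omega,
          show (j + 2 - 1) = j + 1 from by omega]
        ring
      have hfin : D (bistarG n (n-2)) π = (n-1)^2/4 + 1 := by
        rw [hsq]; omega
      refine le_antisymm ?_ (Finset.le_inf' _ _ (fun σ _ => hlow σ))
      have := Finset.inf'_le (b := π) (D (bistarG n (n-2)))  (Finset.mem_univ π)
      rw [hfin] at this
      exact this
    · -- n = 2k+1
      have hk2 : 2 ≤ k := by omega
      obtain ⟨π, hπ⟩ := D_witness n hn k 1 0 (by omega) (by omega) (by omega)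
        (by omega) (by omega) (by omega)
      have habsA : |(k:ℤ) - ((0:ℕ):ℤ)| = (k:ℤ) := by simp
      have habsB : |((1:ℕ):ℤ) - ((0:ℕ):ℤ)| = 1 := by simp
      rw [habsA, habsB, show n - 1 - k = k from by omega] at hπ
      push_cast at hπ
      have h2 : 2 * D (bistarG n (n-2)) π = 2*(k*k) + 2 := by
        zify
        linarith [hπ]
      have hsq : (n-1)^2 = 4*(k*k) := by
        rw [show n - 1 = 2*k from by omega]
        ring
      have hfin : D (bistarG n (n-2)) π = (n-1)^2/4 + 1 := by
        rw [hsq]; omega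
      refine le_antisymm ?_ (Finset.le_inf' _ _ (fun σ _ => hlow σ))
      have := Finset.inf'_le (b := π) (D (bistarG n (n-2))) (Finset.mem_univ π)
      rw [hfin] at this
      exact this
  · -- Dmax
    obtain ⟨π, hπ⟩ := D_witness n hn 0 (n-1) 1 (by omega) (by omega) (by omega)
      (by omega) (by omega) (by omega)
    have habsA : |((0:ℕ):ℤ) - ((1:ℕ):ℤ)| = 1 := by simp
    have habsB : |(((n-1:ℕ)):ℤ) - ((1:ℕ):ℤ)| = (n:ℤ) - 2 := by
      rw [abs_of_nonneg] <;> push_cast [Nat.cast_sub (show 1 ≤ n by omega)] <;> omega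
    rw [habsA, habsB, show n - 1 - 0 = n - 1 from by omega] at hπ
    push_cast [Nat.cast_sub (show 1 ≤ n by omega)] at hπ
    have h2 : 2 * D (bistarG n (n-2)) π = n*n + n - 6 := by
      zify [show 6 ≤ n*n + n by nlinarith]
      linarith [hπ]
    have hprod : (n+3)*(n-2) = n*n + n - 6 := by
      obtain ⟨j, rfl⟩ : ∃ j, n = j + 4 := ⟨n - 4, by omega⟩
      rw [show j + 4 - 2 = j + 2 from by omega]
      have h6 : (j+4)*(j+4) + (j+4) ≥ 6 := by nlinarith
      zify [h6]
      ring
    have hfin : D (bistarG n (n-2)) π = (n+3)*(n-2)/2 := by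
      rw [hprod]
      set m := n * n with hm
      omega
    refine le_antisymm (Finset.sup_le (fun σ _ => (D_bounds n hn σ).1)) ?_
    have := Finset.le_sup (f := D (bistarG n (n-2))) (Finset.mem_univ π)
    rw [hfin] at this
    exact this
end
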